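/- arXiv:1308.1286 — 5 statements merged into one kernel-verified Lean document; each statement's English description precedes it below -/
import Mathlib

section
/- For every prime power q and every integer n ≥ 1, P_n(q) is a positive integer, and one has the identity of formal power series ∏_{n=1}^∞ (1 − x^n)^{−P_n(q)} = ∑_{i=0}^∞ q^i x^i; equivalently, for every N ≥ 0 the coefficient of x^N in ∏_{n=1}^N (1 − x^n)^{−P_n(q)} equals q^N. -/
open scoped ArithmeticFunction ArithmeticFunction.Moebius
open Finset PowerSeries

noncomputable def EPI.M (q n : ℕ) : ℤ := ∑ d ∈ n.divisors, (μ d : ℤ) * (q : ℤ) ^ (n / d)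

lemma EPI.sum_M (q : ℕ) : ∀ n > 0, ∑ d ∈ n.divisors, EPI.M q d = (q : ℤ) ^ n := by
  have := (ArithmeticFunction.sum_eq_iff_sum_mul_moebius_eq
    (R := ℤ) (f := EPI.M q) (g := fun n => (q : ℤ) ^ n)).mpr
  apply this
  intro n hn
  simp only [Int.cast_id]
  rw [Nat.sum_divisorsAntidiagonal (fun i j => (μ i : ℤ) * (q:ℤ) ^ j)]
  rfl

lemma EPI.M_eq_powerset (q n : ℕ) (hn : n ≠ 0) :
    EPI.M q n = ∑ A ∈ n.primeFactors.powerset, (μ (A.prod id) : ℤ) * (q : ℤ) ^ (n / A.prod id) := by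
  have h1 : EPI.M q n
      = ∑ d ∈ n.divisors.filter Squarefree, (μ d : ℤ) * (q : ℤ) ^ (n / d) := by
    rw [EPI.M]
    refine (Finset.sum_filter_of_ne (p := Squarefree) ?_).symm
    intro d hd h
    by_contra hsq
    rw [ArithmeticFunction.moebius_eq_zero_of_not_squarefree hsq] at h
    simp at h
  rw [h1, Nat.sum_divisors_filter_squarefree hn]
  apply Finset.sum_congr
  · rw [Nat.factors_eq]
    simp
  · intro A hA
    simp [Finset.prod_val]

lemma EPI.fermat (q t : ℕ) {p : ℕ} (hp : p.Prime) :
    (p : ℤ) ∣ (q : ℤ) ^ (p * t) - (q : ℤ) ^ t := by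
  haveI : Fact p.Prime := ⟨hp⟩
  rw [← ZMod.intCast_zmod_eq_zero_iff_dvd]
  push_cast
  rw [pow_mul, ZMod.pow_card]
  ring

lemma EPI.lift (q t : ℕ) {p : ℕ} (hp : p.Prime) (v : ℕ) (hv : 1 ≤ v) :
    ((p : ℤ) ^ v) ∣ (q : ℤ) ^ (p ^ v * t) - (q : ℤ) ^ (p ^ (v - 1) * t) := by
  obtain ⟨k, rfl⟩ : ∃ k, v = k + 1 := ⟨v - 1, by omega⟩
  have h : (p : ℤ) ∣ (q : ℤ) ^ (p * t) - (q : ℤ) ^ t := EPI.fermat q t hp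
  have := dvd_sub_pow_of_dvd_sub (R := ℤ) (p := p) h k
  have e1 : ((q:ℤ) ^ (p * t)) ^ p ^ k = (q:ℤ) ^ (p ^ (k+1) * t) := by
    rw [← pow_mul]; congr 1; ring
  have e2 : ((q:ℤ) ^ t) ^ p ^ k = (q:ℤ) ^ (p ^ (k+1-1) * t) := by
    rw [← pow_mul]; congr 1; simp [mul_comm]
  rw [e1, e2] at this
  exact_mod_cast this

lemma EPI.pow_dvd_M (q n p : ℕ) (hn : n ≠ 0) (hp : p.Prime) :
    ((p:ℤ) ^ (n.factorization p)) ∣ EPI.M q n := by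
  set v := n.factorization p with hv
  rcases Nat.eq_zero_or_pos v with h0 | hpos
  · rw [h0]; simp
  have hpn : p ∣ n := by
    have := Nat.ordProj_dvd n p
    exact dvd_trans (dvd_pow_self p hpos.ne') this
  have hpmem : p ∈ n.primeFactors := Nat.mem_primeFactors.mpr ⟨hp, hpn, hn⟩
  set t := n.primeFactors.erase p with ht
  have hins : n.primeFactors = insert p t := (Finset.insert_erase hpmem).symm
  have hpt : p ∉ t := Finset.notMem_erase p _
  set m := n / p ^ v with hm
  have hnm : p ^ v * m = n := Nat.ordProj_mul_ordCompl_eq_self n p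
  have hpm : ¬ p ∣ m := Nat.not_dvd_ordCompl hp hn
  rw [EPI.M_eq_powerset q n hn, hins, Finset.sum_powerset_insert hpt, ← Finset.sum_add_distrib]
  apply Finset.dvd_sum
  intro A hA
  rw [Finset.mem_powerset] at hA
  have hpA : p ∉ A := fun h => hpt (hA h)
  set a := A.prod id with ha
  have hpa : ¬ p ∣ a := by
    intro hd
    obtain ⟨r, hrA, hpr⟩ := (Prime.dvd_finset_prod_iff hp.prime id).mp hd
    have hr : r.Prime := Nat.prime_of_mem_primeFactors (Finset.mem_of_mem_erase (hA hrA))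
    have : p = r := (Nat.prime_dvd_prime_iff_eq hp hr).mp hpr
    exact hpt (this ▸ hA hrA)
  have hins2 : (insert p A).prod id = p * a := by
    rw [Finset.prod_insert hpA]; rfl
  have hcop : Nat.Coprime p a := (Nat.Prime.coprime_iff_not_dvd hp).mpr hpa
  have hmu : (μ (p * a) : ℤ) = -(μ a) := by
    rw [ArithmeticFunction.isMultiplicative_moebius.map_mul_of_coprime hcop,
      ArithmeticFunction.moebius_apply_prime hp]
    ring
  have han : a ∣ n := by
    calc a ∣ n.primeFactors.prod id :=
          Finset.prod_dvd_prod_of_subset A n.primeFactors id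
            (subset_trans hA (Finset.erase_subset p _))
      _ ∣ n := by simpa using Nat.prod_primeFactors_dvd n
  have ham : a ∣ m := by
    have : Nat.Coprime a (p ^ v) := (hcop.symm.pow_right v)
    exact this.dvd_of_dvd_mul_left (hnm ▸ han)
  have ha0 : 0 < a := Nat.pos_of_dvd_of_pos han (Nat.pos_of_ne_zero hn)
  have hdiv1 : n / a = p ^ v * (m / a) := by
    refine Nat.div_eq_of_eq_mul_left ha0 ?_
    rw [mul_assoc, Nat.div_mul_cancel ham, hnm]
  have hdiv2 : n / (p * a) = p ^ (v - 1) * (m / a) := by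
    refine Nat.div_eq_of_eq_mul_left (Nat.mul_pos hp.pos ha0) ?_
    rw [show p ^ (v-1) * (m/a) * (p * a) = p ^ (v-1) * p * ((m/a) * a) by ring,
      ← pow_succ, Nat.sub_add_cancel hpos, Nat.div_mul_cancel ham, hnm]
  rw [hins2, hmu, hdiv1, hdiv2]
  have := EPI.lift q (m / a) hp v hpos
  calc ((p:ℤ)^v) ∣ (μ a : ℤ) * ((q:ℤ) ^ (p ^ v * (m/a)) - (q:ℤ) ^ (p ^ (v-1) * (m/a))) :=
        Dvd.dvd.mul_left this _
    _ = (μ a : ℤ) * (q:ℤ) ^ (p ^ v * (m/a)) + -(μ a : ℤ) * (q:ℤ) ^ (p ^ (v-1) * (m/a)) := by ring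

lemma EPI.dvd_M (q n : ℕ) : (n : ℤ) ∣ EPI.M q n := by
  rcases Nat.eq_zero_or_pos n with rfl | hn
  · simp [EPI.M]
  rw [Int.natCast_dvd]
  rcases Nat.eq_zero_or_pos (EPI.M q n).natAbs with h0 | hM
  · rw [h0]; exact dvd_zero n
  rw [← Nat.factorization_le_iff_dvd hn.ne' hM.ne', Finsupp.le_def]
  intro p
  by_cases hp : p.Prime
  · rw [← Nat.Prime.pow_dvd_iff_le_factorization hp hM.ne', ← Int.natCast_dvd]
    push_cast
    exact EPI.pow_dvd_M q n p hn.ne' hp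
  · simp [Nat.factorization_eq_zero_of_not_prime n hp]
lemma EPI.M_pos (q n : ℕ) (hq : 2 ≤ q) (hn : 1 ≤ n) : 0 < EPI.M q n := by
  classical
  have hn0 : n ≠ 0 := by omega
  have h1 : (1:ℕ) ∈ n.divisors := Nat.one_mem_divisors.mpr hn0
  rw [EPI.M, ← Finset.add_sum_erase _ _ h1]
  have hq2 : (2:ℤ) ≤ (q:ℤ) := by exact_mod_cast hq
  have hqz : (1:ℤ) ≤ (q:ℤ) - 1 := by linarith
  set R := ∑ d ∈ n.divisors.erase 1, (μ d : ℤ) * (q : ℤ) ^ (n / d) with hR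
  have habs : |R| ≤ (q:ℤ) ^ n - 1 := by
    calc |R| ≤ ∑ d ∈ n.divisors.erase 1, |(μ d : ℤ) * (q : ℤ) ^ (n / d)| :=
          Finset.abs_sum_le_sum_abs _ _
      _ ≤ ∑ d ∈ n.divisors.erase 1, (q : ℤ) ^ (n / d) := by
          apply Finset.sum_le_sum
          intro d hd
          rw [abs_mul, abs_pow, abs_of_nonneg (by positivity : (0:ℤ) ≤ (q:ℤ))]
          have : |(μ d : ℤ)| ≤ 1 := by
            by_cases h : Squarefree d
            · rw [ArithmeticFunction.moebius_apply_of_squarefree h]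
              simp [abs_pow]
            · rw [ArithmeticFunction.moebius_eq_zero_of_not_squarefree h]; simp
          calc |(μ d : ℤ)| * (q:ℤ) ^ (n/d) ≤ 1 * (q:ℤ) ^ (n/d) := by
                apply mul_le_mul_of_nonneg_right this (by positivity)
            _ = (q:ℤ) ^ (n/d) := one_mul _
      _ = ∑ j ∈ (n.divisors.erase 1).image (fun d => n / d), (q:ℤ) ^ j := by
          rw [Finset.sum_image]
          intro d1 hd1 d2 hd2 hEq
          have h1' : d1 ∣ n := (Nat.mem_divisors.mp (Finset.mem_of_mem_erase hd1)).1
          have h2' : d2 ∣ n := (Nat.mem_divisors.mp (Finset.mem_of_mem_erase hd2)).1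
          rw [← Nat.div_div_self h1' hn0, ← Nat.div_div_self h2' hn0, show n / d1 = n / d2 from hEq]
      _ ≤ ∑ j ∈ Finset.range (n/2 + 1), (q:ℤ) ^ j := by
          apply Finset.sum_le_sum_of_subset_of_nonneg
          · intro j hj
            rw [Finset.mem_image] at hj
            obtain ⟨d, hd, rfl⟩ := hj
            have hd2 : 2 ≤ d := by
              have := Nat.pos_of_mem_divisors (Finset.mem_of_mem_erase hd)
              have := Finset.ne_of_mem_erase hd
              omega
            have : n / d ≤ n / 2 := Nat.div_le_div_left hd2 (by omega)
            rw [Finset.mem_range]; omega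
          · intro j _ _; positivity
      _ ≤ (q:ℤ) ^ (n/2 + 1) - 1 := by
          have hgs := geom_sum_mul (x := (q:ℤ)) (n := n/2 + 1)
          have hnn : 0 ≤ ∑ j ∈ Finset.range (n/2 + 1), (q:ℤ) ^ j := by positivity
          nlinarith [hgs, hnn]
      _ ≤ (q:ℤ) ^ n - 1 := by
          have : (q:ℤ) ^ (n/2 + 1) ≤ (q:ℤ) ^ n :=
            pow_le_pow_right₀ (by exact_mod_cast (by omega : 1 ≤ q)) (by omega)
          omega
  have hq1 : (1:ℤ) ≤ (q:ℤ) ^ n := one_le_pow₀ (by linarith)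
  simp only [Nat.div_one, ArithmeticFunction.moebius_apply_one]
  have := neg_abs_le R
  push_cast
  nlinarith [habs, hq1]

lemma EPI.constCoeff_one_sub_X_pow (n : ℕ) (hn : 1 ≤ n) :
    constantCoeff (R := ℚ) (1 - X ^ n) = 1 := by
  rw [map_sub, map_one, map_pow, constantCoeff_X, zero_pow (by omega), sub_zero]

lemma EPI.inv_one_sub_X_pow (n : ℕ) (hn : 1 ≤ n) :
    (1 - X ^ n : ℚ⟦X⟧)⁻¹ = PowerSeries.mk (fun k => if n ∣ k then 1 else 0) := by
  rw [eq_comm, PowerSeries.eq_inv_iff_mul_eq_one (by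
    rw [EPI.constCoeff_one_sub_X_pow n hn]; exact one_ne_zero)]
  ext k
  rw [mul_sub, mul_one, map_sub, PowerSeries.coeff_mul_X_pow', PowerSeries.coeff_mk,
    PowerSeries.coeff_one]
  by_cases hle : n ≤ k
  · rw [if_pos hle, PowerSeries.coeff_mk]
    have hk : k ≠ 0 := by omega
    have hiff : n ∣ k ↔ n ∣ k - n := by
      constructor
      · intro h; exact Nat.dvd_sub h dvd_rfl
      · intro h
        have := Nat.dvd_add h (dvd_refl n)
        rwa [Nat.sub_add_cancel hle] at this
    rw [if_neg hk]
    by_cases hd : n ∣ k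
    · rw [if_pos hd, if_pos (hiff.mp hd), sub_self]
    · rw [if_neg hd, if_neg (fun hh => hd (hiff.mpr hh)), sub_self]
  · rw [if_neg hle, sub_zero]
    rcases Nat.eq_zero_or_pos k with rfl | hk
    · simp
    · rw [if_neg (fun hd => hle (Nat.le_of_dvd hk hd)), if_neg (by omega)]

lemma EPI.coeff_inv_one_sub_X_pow (n : ℕ) (hn : 1 ≤ n) (k : ℕ) :
    PowerSeries.coeff (R := ℚ) k (1 - X ^ n : ℚ⟦X⟧)⁻¹ = if n ∣ k then 1 else 0 := by
  rw [EPI.inv_one_sub_X_pow n hn, coeff_mk]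

lemma EPI.D_prod {ι : Type*} [DecidableEq ι] (s : Finset ι) (f : ι → ℚ⟦X⟧) :
    d⁄dX ℚ (∏ i ∈ s, f i) = ∑ i ∈ s, d⁄dX ℚ (f i) * ∏ j ∈ s.erase i, f j := by
  induction s using Finset.induction_on with
  | empty => simp
  | @insert a s' ha ih =>
    rw [Finset.prod_insert ha, Derivation.leibniz, smul_eq_mul, smul_eq_mul, ih, Finset.mul_sum,
      Finset.sum_insert ha, Finset.erase_insert ha]
    rw [add_comm]
    congr 1
    · exact mul_comm _ _
    apply Finset.sum_congr rfl
    intro i hi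
    have hne : i ≠ a := fun h => ha (h ▸ hi)
    rw [Finset.erase_insert_of_ne (Ne.symm hne), Finset.prod_insert (fun h => ha (Finset.mem_of_mem_erase h))]
    ring

lemma EPI.coeff_prod (q : ℕ) (P : ℕ → ℕ) (hP : ∀ n, 1 ≤ n → 1 ≤ P n)
    (hG : ∀ j, 1 ≤ j → ((∑ n ∈ j.divisors, n * P n : ℕ) : ℚ) = (q:ℚ)^j) (N : ℕ) :
    PowerSeries.coeff (R := ℚ) N (∏ n ∈ Finset.Icc 1 N, ((1 - X ^ n : ℚ⟦X⟧)⁻¹) ^ P n) = (q:ℚ)^N := by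
  classical
  set s := Finset.Icc 1 N with hs
  set u : ℕ → ℚ⟦X⟧ := fun n => 1 - X ^ n with hu
  set F : ℚ⟦X⟧ := ∏ n ∈ s, (u n)⁻¹ ^ P n with hF
  set V : ℚ⟦X⟧ := ∏ n ∈ s, (u n) ^ P n with hV
  set W : ℚ⟦X⟧ := ∑ n ∈ s, (C (R := ℚ) ((n:ℚ) * (P n : ℚ))) * (X ^ n * (u n)⁻¹) with hWdef
  have hmem : ∀ n ∈ s, 1 ≤ n ∧ n ≤ N := fun n hn => Finset.mem_Icc.mp hn
  have huc : ∀ n, 1 ≤ n → constantCoeff (R := ℚ) (u n) ≠ 0 := fun n hn => by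
    rw [hu, EPI.constCoeff_one_sub_X_pow n hn]; exact one_ne_zero
  -- F * V = 1
  have hFV : F * V = 1 := by
    rw [hF, hV, ← Finset.prod_mul_distrib]
    apply Finset.prod_eq_one
    intro n hn
    rw [← mul_pow, PowerSeries.inv_mul_cancel _ (huc n (hmem n hn).1), one_pow]
  -- constant coefficient of F
  have h0F : PowerSeries.coeff (R := ℚ) 0 F = 1 := by
    rw [PowerSeries.coeff_zero_eq_constantCoeff, hF, map_prod]
    apply Finset.prod_eq_one
    intro n hn
    rw [map_pow, PowerSeries.constantCoeff_inv, hu]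
    rw [EPI.constCoeff_one_sub_X_pow n (hmem n hn).1, inv_one, one_pow]
  -- X * derivative of u n
  have hDu : ∀ n, 1 ≤ n → X * d⁄dX ℚ (u n) = -((n : ℚ⟦X⟧) * X ^ n) := by
    intro n hn
    rw [hu]
    simp only [map_sub, Derivation.map_one_eq_zero, zero_sub, mul_neg, neg_inj]
    rw [Derivation.leibniz_pow, derivative_X, smul_eq_mul, mul_one, nsmul_eq_mul]
    rw [show (X : ℚ⟦X⟧) * ((n:ℚ⟦X⟧) * X ^ (n-1)) = (n:ℚ⟦X⟧) * (X ^ (n-1) * X) by ring,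
      ← pow_succ, Nat.sub_add_cancel hn]
  -- per-factor identity
  have hterm : ∀ n ∈ s, X * d⁄dX ℚ ((u n) ^ P n) * ∏ m ∈ s.erase n, (u m) ^ P m
      = -((C (R := ℚ) ((n:ℚ) * (P n : ℚ))) * (X ^ n * (u n)⁻¹) * V) := by
    intro n hn
    obtain ⟨hn1, hnN⟩ := hmem n hn
    have hpow : u n ^ P n * (u n)⁻¹ = u n ^ (P n - 1) := by
      conv_lhs => rw [show P n = (P n - 1) + 1 from (Nat.succ_pred_eq_of_pos (hP n hn1)).symm,
        pow_succ]
      rw [mul_assoc, PowerSeries.mul_inv_cancel _ (huc n hn1), mul_one]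
    have hVsplit : V = u n ^ P n * ∏ m ∈ s.erase n, (u m) ^ P m :=
      (Finset.mul_prod_erase s _ hn).symm
    rw [Derivation.leibniz_pow, smul_eq_mul, nsmul_eq_mul, hVsplit]
    have hC : (C (R := ℚ) ((n:ℚ) * (P n : ℚ))) = (n : ℚ⟦X⟧) * (P n : ℚ⟦X⟧) := by
      rw [map_mul, map_natCast, map_natCast]
    rw [hC]
    have hdu := hDu n hn1
    set E := ∏ m ∈ s.erase n, (u m) ^ P m
    -- LHS : X * ((P n) * u^{P-1} * D u) * E ; use hdu and hpow
    calc (X : ℚ⟦X⟧) * ((P n : ℚ⟦X⟧) * (u n ^ (P n - 1) * d⁄dX ℚ (u n))) * E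
        = (P n : ℚ⟦X⟧) * u n ^ (P n - 1) * (X * d⁄dX ℚ (u n)) * E := by ring
      _ = (P n : ℚ⟦X⟧) * u n ^ (P n - 1) * (-((n : ℚ⟦X⟧) * X ^ n)) * E := by rw [hdu]
      _ = -((n : ℚ⟦X⟧) * (P n : ℚ⟦X⟧) * (X ^ n * (u n)⁻¹) * (u n ^ P n * E)) := by
          rw [show (n : ℚ⟦X⟧) * (P n : ℚ⟦X⟧) * (X ^ n * (u n)⁻¹) * (u n ^ P n * E)
              = (n : ℚ⟦X⟧) * (P n : ℚ⟦X⟧) * X ^ n * (u n ^ P n * (u n)⁻¹) * E by ring, hpow]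
          ring
  -- X * D V = -(V * W)
  have hXDV : X * d⁄dX ℚ V = -(V * W) := by
    rw [hV, EPI.D_prod, Finset.mul_sum]
    have : -(V * W) = ∑ n ∈ s, -((C (R := ℚ) ((n:ℚ) * (P n : ℚ))) * (X ^ n * (u n)⁻¹) * V) := by
      rw [hWdef, Finset.mul_sum, ← Finset.sum_neg_distrib]
      exact Finset.sum_congr rfl fun n _ => by ring
    rw [this]
    exact Finset.sum_congr rfl fun n hn => by rw [← mul_assoc, hterm n hn]
  -- X * D F = F * W
  have hDFV : d⁄dX ℚ F * V + F * d⁄dX ℚ V = 0 := by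
    have h := congrArg (d⁄dX ℚ) hFV
    rw [Derivation.leibniz, smul_eq_mul, smul_eq_mul, Derivation.map_one_eq_zero] at h
    linear_combination h
  have hDV2 : d⁄dX ℚ F * V = -(F * d⁄dX ℚ V) := by linear_combination hDFV
  have hXDF : X * d⁄dX ℚ F = F * W := by
    calc X * d⁄dX ℚ F = (X * d⁄dX ℚ F) * (F * V) := by rw [hFV, mul_one]
      _ = (d⁄dX ℚ F * V) * (X * F) := by ring
      _ = -(F * d⁄dX ℚ V) * (X * F) := by rw [hDV2]
      _ = (X * d⁄dX ℚ V) * (-(F * F)) := by ring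
      _ = -(V * W) * (-(F * F)) := by rw [hXDV]
      _ = (F * V) * (F * W) := by ring
      _ = F * W := by rw [hFV, one_mul]
  -- coefficients of W
  have hW0 : PowerSeries.coeff (R := ℚ) 0 W = 0 := by
    rw [hWdef, map_sum]
    apply Finset.sum_eq_zero
    intro n hn
    have hn1 := (hmem n hn).1
    rw [PowerSeries.coeff_C_mul, PowerSeries.coeff_X_pow_mul', if_neg (by omega), mul_zero]
  have hWj : ∀ j, 1 ≤ j → j ≤ N → PowerSeries.coeff (R := ℚ) j W = (q:ℚ)^j := by
    intro j hj1 hjN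
    rw [hWdef, map_sum]
    have hterm2 : ∀ n ∈ s, PowerSeries.coeff (R := ℚ) j ((C (R := ℚ) ((n:ℚ) * (P n : ℚ))) * (X ^ n * (u n)⁻¹))
        = if n ∣ j then (n:ℚ) * P n else 0 := by
      intro n hn
      obtain ⟨hn1, hnN⟩ := hmem n hn
      rw [PowerSeries.coeff_C_mul, PowerSeries.coeff_X_pow_mul']
      by_cases hd : n ∣ j
      · have hle : n ≤ j := Nat.le_of_dvd (by omega) hd
        rw [if_pos hle, if_pos hd, hu, EPI.coeff_inv_one_sub_X_pow n hn1,
          if_pos (Nat.dvd_sub hd dvd_rfl), mul_one]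
      · rw [if_neg hd]
        by_cases hle : n ≤ j
        · rw [if_pos hle, hu, EPI.coeff_inv_one_sub_X_pow n hn1, if_neg, mul_zero]
          intro hdd
          exact hd (by have := Nat.dvd_add hdd (dvd_refl n); rwa [Nat.sub_add_cancel hle] at this)
        · rw [if_neg hle, mul_zero]
    rw [Finset.sum_congr rfl hterm2, ← Finset.sum_filter]
    have hfe : s.filter (· ∣ j) = j.divisors := by
      ext n
      simp only [Finset.mem_filter, hs, Finset.mem_Icc, Nat.mem_divisors]
      constructor
      · rintro ⟨⟨h1, h2⟩, h3⟩; exact ⟨h3, by omega⟩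
      · rintro ⟨h1, h2⟩
        exact ⟨⟨Nat.pos_of_dvd_of_pos h1 (by omega), le_trans (Nat.le_of_dvd (by omega) h1) hjN⟩, h1⟩
    rw [hfe]
    have hg := hG j hj1
    push_cast at hg
    exact hg
  -- strong induction on coefficients
  have main : ∀ k, k ≤ N → PowerSeries.coeff (R := ℚ) k F = (q:ℚ)^k := by
    intro k
    induction k using Nat.strong_induction_on with
    | _ k ih =>
      intro hkN
      match k with
      | 0 => simpa using h0F
      | (m+1) =>
        have hL : PowerSeries.coeff (R := ℚ) (m+1) (X * d⁄dX ℚ F)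
            = PowerSeries.coeff (R := ℚ) (m+1) F * (m+1) := by
          rw [PowerSeries.coeff_succ_X_mul, PowerSeries.coeff_derivative]
        have hR : PowerSeries.coeff (R := ℚ) (m+1) (F * W) = ((m:ℚ)+1) * (q:ℚ)^(m+1) := by
          rw [PowerSeries.coeff_mul, Finset.Nat.sum_antidiagonal_eq_sum_range_succ_mk,
            Finset.sum_range_succ]
          have he : ∀ i ∈ Finset.range (m+1),
              PowerSeries.coeff (R := ℚ) i F * PowerSeries.coeff (R := ℚ) (m+1-i) W = (q:ℚ)^(m+1) := by
            intro i hi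
            rw [Finset.mem_range] at hi
            rw [ih i (by omega) (by omega), hWj (m+1-i) (by omega) (by omega), ← pow_add]
            congr 1
            omega
          rw [Finset.sum_congr rfl he, Finset.sum_const, Finset.card_range, Nat.sub_self, hW0,
            mul_zero, add_zero, nsmul_eq_mul]
          push_cast; ring
        have := hXDF
        have hkey : PowerSeries.coeff (R := ℚ) (m+1) F * (m+1) = ((m:ℚ)+1) * (q:ℚ)^(m+1) := by
          rw [← hL, ← hR, this]
        have hne : ((m:ℚ)+1) ≠ 0 := by positivity
        field_simp at hkey
        exact hkey
  exact main N le_rfl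
/-- For a prime power `q`, `P_n(q) = (1/n) ∑_{ij=n} μ(i) q^j` is a positive integer for
every `n ≥ 1`, and `∏_{n≥1} (1 - x^n)^{-P_n(q)} = ∑_{i≥0} q^i x^i` as formal power
series; coefficientwise, for every `N` the coefficient of `x^N` in
`∏_{n=1}^N (1 - x^n)^{-P_n(q)}` equals `q^N`. -/
theorem euler_product_identity_for_prime_power (q : ℕ) (hq : IsPrimePow q) :
    ∃ P : ℕ → ℕ,
      (∀ n : ℕ, 1 ≤ n →
        0 < P n ∧
        (P n : ℚ) = (∑ d ∈ n.divisors, (μ d : ℚ) * (q : ℚ) ^ (n / d)) / n) ∧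
      ∀ N : ℕ,
        PowerSeries.coeff (R := ℚ) N
            (∏ n ∈ Finset.Icc 1 N, ((1 - PowerSeries.X ^ n)⁻¹) ^ P n) = (q : ℚ) ^ N := by
  have hq2 : 2 ≤ q := hq.two_le
  set P : ℕ → ℕ := fun (n : ℕ) => ((EPI.M q n) / (n : ℤ)).toNat with hPdef
  have key : ∀ n : ℕ, 1 ≤ n → (n : ℤ) * (P n : ℤ) = EPI.M q n ∧ 0 < P n := by
    intro n hn
    obtain ⟨c, hc⟩ := EPI.dvd_M q n
    have hM := EPI.M_pos q n hq2 hn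
    have hn0 : (n : ℤ) ≠ 0 := by exact_mod_cast (by omega : n ≠ 0)
    have hc0 : 0 < c := by
      rcases lt_trichotomy c 0 with h | h | h
      · nlinarith [hc, hM, (by exact_mod_cast (by omega : 0 < n) : (0:ℤ) < n)]
      · rw [h, mul_zero] at hc; omega
      · exact h
    have hPn : (P n : ℤ) = c := by
      rw [hPdef]
      simp only []
      rw [hc, Int.mul_ediv_cancel_left _ hn0, Int.toNat_of_nonneg hc0.le]
    constructor
    · rw [hPn, ← hc]
    · have : (0:ℤ) < (P n : ℤ) := hPn ▸ hc0
      exact_mod_cast this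
  have hP1 : ∀ n, 1 ≤ n → 1 ≤ P n := fun n hn => (key n hn).2
  have hG : ∀ j, 1 ≤ j → ((∑ n ∈ j.divisors, n * P n : ℕ) : ℚ) = (q : ℚ) ^ j := by
    intro j hj
    have hz : ((∑ n ∈ j.divisors, n * P n : ℕ) : ℤ) = (q : ℤ) ^ j := by
      push_cast
      rw [← EPI.sum_M q j (by omega)]
      exact Finset.sum_congr rfl fun d hd =>
        (key d (Nat.pos_of_mem_divisors hd)).1
    exact_mod_cast hz
  refine ⟨P, fun n hn => ⟨(key n hn).2, ?_⟩, fun N => EPI.coeff_prod q P hP1 hG N⟩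
  have hn0 : ((n : ℚ)) ≠ 0 := by exact_mod_cast (by omega : n ≠ 0)
  rw [eq_div_iff hn0]
  have h1 := (key n hn).1
  have h2 : ((EPI.M q n : ℤ) : ℚ) = ∑ d ∈ n.divisors, (μ d : ℚ) * (q : ℚ) ^ (n / d) := by
    rw [EPI.M]
    push_cast
    rfl
  rw [← h2, ← h1]
  push_cast
  ring
end

section
/- Let 0 < a1 ≤ a2 be real numbers and let q ≥ 2 be a real number. Let e_1, e_2, … be non-negative integers satisfying a1 q^n / n ≤ e_n ≤ a2 q^n / n for all n ≥ 1, and define real numbers d_0 = 1, d_1, d_2, … by the formal power series identity ∑_{n=0}^∞ d_n x^n = ∏_{n=1}^∞ (1 − x^n)^{−e_n}. Then there exist real constants A1, depending only on a1, and A2, depending only on a2, such that for all n ≥ 0: (n+1)^{A1} q^n ≤ d_n ≤ (n+1)^{A2} q^n. -/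
open PowerSeries Finset

namespace EulerAux

noncomputable def G (i : ℕ) : PowerSeries ℝ := PowerSeries.mk fun n => if i ∣ n then (1:ℝ) else 0

@[simp] lemma coeff_G (i n : ℕ) : coeff (R := ℝ) n (G i) = if i ∣ n then 1 else 0 := coeff_mk n _

lemma G_mul (i : ℕ) (hi : 1 ≤ i) : (1 - X ^ i) * G i = 1 := by
  ext n
  rw [sub_mul, one_mul, map_sub, PowerSeries.coeff_X_pow_mul', coeff_G, PowerSeries.coeff_one]
  rcases Nat.eq_zero_or_pos n with rfl | hn
  · have h1 : ¬ i ≤ 0 := by omega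
    simp [h1]
  · rw [if_neg (show ¬ n = 0 by omega)]
    by_cases h : i ≤ n
    · rw [if_pos h, coeff_G]
      by_cases hd : i ∣ n
      · rw [if_pos hd, if_pos (Nat.dvd_sub hd dvd_rfl), sub_self]
      · have h2 : ¬ i ∣ n - i := fun hd2 => hd (by
          have h3 := Nat.sub_add_cancel h
          calc i ∣ (n - i) + i := Nat.dvd_add hd2 dvd_rfl
            _ = n := h3)
        rw [if_neg hd, if_neg h2, sub_self]
    · have : ¬ i ∣ n := fun hd => absurd (Nat.le_of_dvd hn hd) h
      rw [if_neg this, if_neg h, sub_self]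

lemma G_eq (i : ℕ) (hi : 1 ≤ i) : (1 - X ^ i : PowerSeries ℝ)⁻¹ = G i := by
  rw [PowerSeries.inv_eq_iff_mul_eq_one, mul_comm, G_mul i hi]
  have : constantCoeff (R := ℝ) (1 - X ^ i : PowerSeries ℝ) = 1 := by
    rw [map_sub, map_one, map_pow, constantCoeff_X]
    simp [zero_pow (by omega : i ≠ 0)]
  rw [this]; exact one_ne_zero

lemma nonneg_mul {f g : PowerSeries ℝ} (hf : ∀ n, 0 ≤ coeff (R := ℝ) n f) (hg : ∀ n, 0 ≤ coeff (R := ℝ) n g)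
    (n : ℕ) : 0 ≤ coeff (R := ℝ) n (f * g) := by
  rw [PowerSeries.coeff_mul]
  exact Finset.sum_nonneg fun p _ => mul_nonneg (hf _) (hg _)

lemma nonneg_G (i n : ℕ) : 0 ≤ coeff (R := ℝ) n (G i) := by
  rw [coeff_G]; positivity

lemma nonneg_one (n : ℕ) : 0 ≤ coeff (R := ℝ) n (1 : PowerSeries ℝ) := by
  rw [PowerSeries.coeff_one]; positivity

lemma nonneg_prod (e : ℕ → ℕ) (s : Finset ℕ) (n : ℕ) :
    0 ≤ coeff (R := ℝ) n (∏ i ∈ s, (G i) ^ (e i)) := by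
  have : ∀ m, 0 ≤ coeff (R := ℝ) m (∏ i ∈ s, (G i) ^ (e i)) := by
    refine Finset.prod_induction _ (fun f => ∀ m, 0 ≤ coeff (R := ℝ) m f)
      (fun f g hf hg => nonneg_mul hf hg) nonneg_one ?_
    intro i _
    induction e i with
    | zero => simpa using nonneg_one
    | succ k ih => intro m; rw [pow_succ]; exact nonneg_mul ih (nonneg_G i) m
  exact this n

lemma constantCoeff_G_pow (i k : ℕ) : coeff (R := ℝ) 0 ((G i) ^ k) = 1 := by
  rw [coeff_zero_eq_constantCoeff, map_pow]
  have : constantCoeff (R := ℝ) (G i) = 1 := by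
    rw [← coeff_zero_eq_constantCoeff_apply, coeff_G, if_pos (dvd_zero i)]
  rw [this, one_pow]

lemma low_G_pow (i k : ℕ) : ∀ b, 0 < b → b < i → coeff (R := ℝ) b ((G i) ^ k) = 0 := by
  induction k with
  | zero =>
    intro b hb hbi
    rw [pow_zero, PowerSeries.coeff_one, if_neg (by omega)]
  | succ k ih =>
    intro b hb hbi
    rw [pow_succ, PowerSeries.coeff_mul]
    refine Finset.sum_eq_zero fun p hp => ?_
    have hps : p.1 + p.2 = b := Finset.HasAntidiagonal.mem_antidiagonal.mp hp
    rcases Nat.eq_zero_or_pos p.1 with h1 | h1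
    · have hp2 : 0 < p.2 := by omega
      have : ¬ i ∣ p.2 := fun hd => absurd (Nat.le_of_dvd hp2 hd) (by omega)
      rw [coeff_G, if_neg this, mul_zero]
    · rw [ih p.1 h1 (by omega), zero_mul]

lemma coeff_mul_low (f g : PowerSeries ℝ) (n i : ℕ) (hn : n < i)
    (h0 : coeff (R := ℝ) 0 g = 1) (h : ∀ b, 0 < b → b < i → coeff (R := ℝ) b g = 0) :
    coeff (R := ℝ) n (f * g) = coeff (R := ℝ) n f := by
  rw [PowerSeries.coeff_mul]
  rw [Finset.sum_eq_single (n, 0)]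
  · rw [h0, mul_one]
  · rintro ⟨a, b⟩ hmem hne
    have hab : a + b = n := Finset.HasAntidiagonal.mem_antidiagonal.mp hmem
    have hb : 0 < b := by
      rcases Nat.eq_zero_or_pos b with rfl | h' ; · exact absurd (by omega : a = n) (by
        intro ha; exact hne (by rw [ha]))
      exact h'
    rw [h b hb (by omega), mul_zero]
  · intro hmem
    exact absurd (Finset.HasAntidiagonal.mem_antidiagonal.mpr (by omega)) hmem

lemma coeff_prod_stable (e : ℕ → ℕ) (n : ℕ) : ∀ N, n ≤ N →
    coeff (R := ℝ) n (∏ i ∈ Icc 1 N, (G i) ^ (e i)) = coeff (R := ℝ) n (∏ i ∈ Icc 1 n, (G i) ^ (e i)) := by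
  intro N
  induction N with
  | zero =>
    intro h
    have hn0 : n = 0 := by omega
    subst hn0; rfl
  | succ N ih =>
    intro h
    rcases Nat.lt_or_ge n (N+1) with h' | h'
    · rw [Finset.prod_Icc_succ_top (by omega : 1 ≤ N + 1)]
      rw [coeff_mul_low _ _ n (N+1) h' (constantCoeff_G_pow _ _)
        (fun b hb hbi => low_G_pow _ _ b hb hbi)]
      exact ih (by omega)
    · have : n = N + 1 := by omega
      subst this; rfl

lemma deriv_G (i : ℕ) (hi : 1 ≤ i) :
    d⁄dX ℝ (G i) = C (R := ℝ) (i:ℝ) * X ^ (i-1) * (G i * G i) := by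
  have h0 : d⁄dX ℝ ((1 - X ^ i) * G i) = 0 := by
    rw [G_mul i hi]; exact Derivation.map_one_eq_zero _
  rw [Derivation.leibniz] at h0
  have hDX : d⁄dX ℝ ((1 : PowerSeries ℝ) - X ^ i) = - (C (R := ℝ) (i:ℝ) * X ^ (i-1)) := by
    rw [map_sub, Derivation.map_one_eq_zero, Derivation.leibniz_pow, derivative_X]
    rw [smul_eq_mul, mul_one, nsmul_eq_mul, map_natCast (C (R := ℝ)) i]
    ring
  rw [hDX] at h0
  have h1 : (1 - X ^ i) * d⁄dX ℝ (G i) = G i * (C (R := ℝ) (i:ℝ) * X ^ (i-1)) := by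
    have := h0
    rw [smul_eq_mul, smul_eq_mul] at this
    linear_combination this
  have h2 := congrArg (fun f => G i * f) h1
  rw [← mul_assoc, mul_comm (G i) (1 - X ^ i), G_mul i hi, one_mul] at h2
  rw [h2]; ring

lemma deriv_G_pow (i e : ℕ) (hi : 1 ≤ i) :
    d⁄dX ℝ ((G i) ^ e) = C (R := ℝ) ((e : ℝ) * i) * X ^ (i-1) * G i * (G i) ^ e := by
  rcases e with _ | e
  · simp [Derivation.map_one_eq_zero]
  · rw [Derivation.leibniz_pow, deriv_G i hi, smul_eq_mul, nsmul_eq_mul,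
      ← map_natCast (C (R := ℝ)) (e+1), map_mul, Nat.succ_sub_one]
    ring

lemma deriv_prod (e : ℕ → ℕ) (N : ℕ) :
    d⁄dX ℝ (∏ i ∈ Icc 1 N, (G i) ^ (e i)) =
      (∑ i ∈ Icc 1 N, C (R := ℝ) ((e i : ℝ) * i) * X ^ (i-1) * G i) *
        ∏ i ∈ Icc 1 N, (G i) ^ (e i) := by
  induction N with
  | zero => simp [Derivation.map_one_eq_zero]
  | succ N ih =>
    rw [Finset.prod_Icc_succ_top (by omega : 1 ≤ N + 1),
      Finset.sum_Icc_succ_top (by omega : 1 ≤ N + 1),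
      Derivation.leibniz, ih, deriv_G_pow (N+1) (e (N+1)) (by omega),
      smul_eq_mul, smul_eq_mul]
    ring

lemma geom_le (q : ℝ) (hq : 2 ≤ q) : ∀ j : ℕ, ∑ i ∈ Icc 1 j, q ^ i ≤ 2 * q ^ j := by
  intro j
  induction j with
  | zero => norm_num
  | succ j ih =>
    rw [Finset.sum_Icc_succ_top (by omega : 1 ≤ j + 1)]
    have h1 : (2:ℝ) * q ^ j ≤ q ^ (j+1) := by
      rw [pow_succ]
      calc 2 * q ^ j = q ^ j * 2 := by ring
        _ ≤ q ^ j * q := by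
          exact mul_le_mul_of_nonneg_left hq (by positivity)
    nlinarith [pow_nonneg (by linarith : (0:ℝ) ≤ q) (j+1)]

lemma divisor_sum_le (q : ℝ) (hq : 2 ≤ q) (m : ℕ) (hm : 1 ≤ m) :
    ∑ i ∈ m.divisors, q ^ i ≤ 2 * q ^ m := by
  have hq0 : (0:ℝ) ≤ q := by linarith
  have hsplit : ∑ i ∈ m.divisors, q ^ i = q ^ m + ∑ i ∈ m.properDivisors, q ^ i := by
    rw [← Nat.insert_self_properDivisors (by omega : m ≠ 0),
      Finset.sum_insert (fun h => absurd (Nat.mem_properDivisors.mp h).2 (lt_irrefl m))]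
  have hsub : m.properDivisors ⊆ Icc 1 (m / 2) := by
    intro i hi
    obtain ⟨hd, hlt⟩ := Nat.mem_properDivisors.mp hi
    have hipos : 0 < i := Nat.pos_of_mem_properDivisors hi
    obtain ⟨c, hc⟩ := hd
    have hc2 : 2 ≤ c := by
      rcases Nat.lt_or_ge c 2 with h | h
      · interval_cases c <;> omega
      · exact h
    have : 2 * i ≤ m := by
      calc 2 * i ≤ c * i := Nat.mul_le_mul_right i hc2
        _ = m := by rw [hc]; ring
    rw [Finset.mem_Icc]
    constructor
    · omega
    · omega
  have h1 : ∑ i ∈ m.properDivisors, q ^ i ≤ ∑ i ∈ Icc 1 (m / 2), q ^ i :=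
    Finset.sum_le_sum_of_subset_of_nonneg hsub (fun i _ _ => by positivity)
  have h2 : ∑ i ∈ Icc 1 (m / 2), q ^ i ≤ 2 * q ^ (m / 2) := geom_le q hq _
  have h3 : (2:ℝ) * q ^ (m / 2) ≤ q ^ m := by
    have hlt : m / 2 + 1 ≤ m := by omega
    calc (2:ℝ) * q ^ (m / 2) ≤ q * q ^ (m / 2) :=
        mul_le_mul_of_nonneg_right hq (by positivity)
      _ = q ^ (m / 2 + 1) := by rw [pow_succ]; ring
      _ ≤ q ^ m := pow_le_pow_right₀ (by linarith) hlt
  linarith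

lemma bern (A : ℝ) (hA : 0 ≤ A) (t : ℝ) (ht : 1 ≤ t) :
    (A + 1) * t ^ A ≤ (t + 1) ^ (A + 1) - t ^ (A + 1) := by
  have ht0 : 0 < t := lt_of_lt_of_le one_pos ht
  have e1 : (t + 1) ^ (A + 1) = t ^ (A + 1) * (1 + 1 / t) ^ (A + 1) := by
    rw [← Real.mul_rpow (le_of_lt ht0) (by positivity)]
    congr 1
    field_simp
  have e2 : 1 + (A + 1) * (1 / t) ≤ (1 + 1 / t) ^ (A + 1) :=
    one_add_mul_self_le_rpow_one_add (by have := one_div_nonneg.mpr ht0.le; linarith) (by linarith)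
  have e3 : t ^ (A + 1) = t ^ A * t := Real.rpow_add_one (ne_of_gt ht0) A
  have e4 : t ^ (A + 1) * (1 / t) = t ^ A := by
    rw [e3]; field_simp
  have h4 := mul_le_mul_of_nonneg_left e2 (Real.rpow_nonneg (le_of_lt ht0) (A + 1))
  nlinarith [h4, e1, e4]

lemma sum_rpow_le (A : ℝ) (hA : 0 ≤ A) (M : ℕ) :
    (A + 1) * ∑ b ∈ range M, ((b : ℝ) + 1) ^ A ≤ ((M : ℝ) + 1) ^ (A + 1) := by
  have tel : ∑ b ∈ range M, ((((b : ℝ) + 1) + 1) ^ (A + 1) - ((b : ℝ) + 1) ^ (A + 1))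
      = ((M : ℝ) + 1) ^ (A + 1) - 1 := by
    have h := Finset.sum_range_sub (fun b : ℕ => ((b : ℝ) + 1) ^ (A + 1)) M
    have h0 : ((0 : ℕ) : ℝ) + 1 = 1 := by norm_num
    rw [h0, Real.one_rpow] at h
    rw [← h]
    refine Finset.sum_congr rfl fun b _ => ?_
    push_cast
    ring_nf
  calc (A + 1) * ∑ b ∈ range M, ((b : ℝ) + 1) ^ A
      = ∑ b ∈ range M, (A + 1) * ((b : ℝ) + 1) ^ A := Finset.mul_sum _ _ _
    _ ≤ ∑ b ∈ range M, ((((b : ℝ) + 1) + 1) ^ (A + 1) - ((b : ℝ) + 1) ^ (A + 1)) :=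
        Finset.sum_le_sum fun b _ => bern A hA _ (by have := Nat.cast_nonneg (α := ℝ) b; linarith)
    _ = ((M : ℝ) + 1) ^ (A + 1) - 1 := tel
    _ ≤ ((M : ℝ) + 1) ^ (A + 1) := by linarith


lemma nonneg_G_pow (i k n : ℕ) : 0 ≤ coeff (R := ℝ) n ((G i) ^ k) := by
  induction k generalizing n with
  | zero => rw [pow_zero]; exact nonneg_one n
  | succ k ih => rw [pow_succ]; exact nonneg_mul ih (nonneg_G i) n

lemma coeff_S_bound (a2 q : ℝ) (ha2 : 0 < a2) (hq : 2 ≤ q) (e : ℕ → ℕ)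
    (he : ∀ i : ℕ, 1 ≤ i → (i : ℝ) * e i ≤ a2 * q ^ i) (N k : ℕ) :
    coeff (R := ℝ) k (∑ i ∈ Icc 1 N, C (R := ℝ) ((e i : ℝ) * i) * X ^ (i - 1) * G i)
      ≤ 2 * a2 * q ^ (k + 1) := by
  have hq0 : (0:ℝ) < q := by linarith
  rw [map_sum]
  have hterm : ∀ i ∈ Icc 1 N,
      coeff (R := ℝ) k (C (R := ℝ) ((e i : ℝ) * i) * X ^ (i - 1) * G i)
        ≤ if i ∣ k + 1 then a2 * q ^ i else 0 := by
    intro i hi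
    have hi1 : 1 ≤ i := (mem_Icc.mp hi).1
    rw [mul_assoc, PowerSeries.coeff_C_mul, PowerSeries.coeff_X_pow_mul']
    by_cases hle : i - 1 ≤ k
    · rw [if_pos hle, coeff_G]
      have hiff : i ∣ k - (i - 1) ↔ i ∣ k + 1 := by
        have h1 : k - (i - 1) = k + 1 - i := by omega
        rw [h1]
        constructor
        · intro hd
          have h2 : k + 1 - i + i = k + 1 := Nat.sub_add_cancel (by omega)
          calc i ∣ (k + 1 - i) + i := Nat.dvd_add hd dvd_rfl
            _ = k + 1 := h2
        · intro hd; exact Nat.dvd_sub hd dvd_rfl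
      by_cases hd : i ∣ k + 1
      · rw [if_pos (hiff.mpr hd), if_pos hd, mul_one]
        have h3 := he i hi1
        have h4 : (i : ℝ) * e i = (e i : ℝ) * i := by ring
        linarith
      · rw [if_neg (fun h => hd (hiff.mp h)), if_neg hd, mul_zero]
    · rw [if_neg hle, mul_zero]
      by_cases hd : i ∣ k + 1
      · rw [if_pos hd]; positivity
      · rw [if_neg hd]
  calc ∑ i ∈ Icc 1 N, coeff (R := ℝ) k (C (R := ℝ) ((e i : ℝ) * i) * X ^ (i - 1) * G i)
      ≤ ∑ i ∈ Icc 1 N, (if i ∣ k + 1 then a2 * q ^ i else 0) := Finset.sum_le_sum hterm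
    _ = ∑ i ∈ (Icc 1 N).filter (· ∣ k + 1), a2 * q ^ i := (Finset.sum_filter _ _).symm
    _ ≤ ∑ i ∈ (k + 1).divisors, a2 * q ^ i := by
        refine Finset.sum_le_sum_of_subset_of_nonneg ?_ (fun i _ _ => by positivity)
        intro i hi
        rw [Finset.mem_filter] at hi
        exact Nat.mem_divisors.mpr ⟨hi.2, by omega⟩
    _ = a2 * ∑ i ∈ (k + 1).divisors, q ^ i := by rw [Finset.mul_sum]
    _ ≤ a2 * (2 * q ^ (k + 1)) :=
        mul_le_mul_of_nonneg_left (divisor_sum_le q hq (k + 1) (by omega)) (le_of_lt ha2)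
    _ = 2 * a2 * q ^ (k + 1) := by ring

lemma upper_main (a2 q : ℝ) (ha2 : 0 < a2) (hq : 2 ≤ q) (e : ℕ → ℕ)
    (he : ∀ i : ℕ, 1 ≤ i → (i : ℝ) * e i ≤ a2 * q ^ i) :
    ∀ n, coeff (R := ℝ) n (∏ i ∈ Icc 1 n, (G i) ^ (e i)) ≤ ((n : ℝ) + 1) ^ (4 * a2) * q ^ n := by
  have hq0 : (0:ℝ) < q := by linarith
  intro n
  induction n using Nat.strong_induction_on with
  | _ n ih =>
    rcases n with _ | m
    · rw [show (Icc 1 0 : Finset ℕ) = ∅ by rfl, Finset.prod_empty, PowerSeries.coeff_one]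
      norm_num [Real.one_rpow]
    · set A : ℝ := 4 * a2 with hA
      have hA0 : 0 < A := by positivity
      set P : PowerSeries ℝ := ∏ i ∈ Icc 1 (m + 1), (G i) ^ (e i) with hP
      set S : PowerSeries ℝ := ∑ i ∈ Icc 1 (m + 1), C (R := ℝ) ((e i : ℝ) * i) * X ^ (i - 1) * G i
        with hS
      set Sg : ℝ := ∑ b ∈ range (m + 1), ((b : ℝ) + 1) ^ A with hSgdef
      set T : ℝ := ((m : ℝ) + 2) ^ A with hT
      have hT0 : 0 ≤ T := Real.rpow_nonneg (by positivity) A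
      have hSg0 : 0 ≤ Sg := Finset.sum_nonneg fun b _ =>
        Real.rpow_nonneg (by positivity) A
      -- the derivative recursion
      have hder : coeff (R := ℝ) (m + 1) P * ((m : ℝ) + 1) = coeff (R := ℝ) m (S * P) := by
        rw [hP, hS, ← deriv_prod e (m + 1), PowerSeries.coeff_derivative]
      have hconv : coeff (R := ℝ) m (S * P) =
          ∑ k ∈ range (m + 1), coeff (R := ℝ) k S * coeff (R := ℝ) (m - k) P := by
        rw [PowerSeries.coeff_mul, Finset.Nat.sum_antidiagonal_eq_sum_range_succ_mk]
      have hterm : ∀ k ∈ range (m + 1),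
          coeff (R := ℝ) k S * coeff (R := ℝ) (m - k) P
            ≤ 2 * a2 * q ^ (m + 1) * (((m - k : ℕ) : ℝ) + 1) ^ A := by
        intro k hk
        have hkm : k ≤ m := by
          have := Finset.mem_range.mp hk; omega
        have hb1 : coeff (R := ℝ) k S ≤ 2 * a2 * q ^ (k + 1) := coeff_S_bound a2 q ha2 hq e he _ _
        have hb2 : coeff (R := ℝ) (m - k) P = coeff (R := ℝ) (m - k) (∏ i ∈ Icc 1 (m - k), (G i) ^ (e i)) :=
          coeff_prod_stable e (m - k) (m + 1) (by omega)
        have hb3 : coeff (R := ℝ) (m - k) P ≤ (((m - k : ℕ) : ℝ) + 1) ^ A * q ^ (m - k) := by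
          rw [hb2]; exact ih (m - k) (by omega)
        have hb4 : 0 ≤ coeff (R := ℝ) (m - k) P := by rw [hP]; exact nonneg_prod e _ _
        have hb5 : 0 ≤ coeff (R := ℝ) k S → True := fun _ => trivial
        have hqq : q ^ (k + 1) * q ^ (m - k) = q ^ (m + 1) := by
          rw [← pow_add]; congr 1; omega
        calc coeff (R := ℝ) k S * coeff (R := ℝ) (m - k) P
            ≤ (2 * a2 * q ^ (k + 1)) * ((((m - k : ℕ) : ℝ) + 1) ^ A * q ^ (m - k)) :=
              mul_le_mul hb1 hb3 hb4 (by positivity)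
          _ = 2 * a2 * q ^ (m + 1) * (((m - k : ℕ) : ℝ) + 1) ^ A := by
              linear_combination (2 * a2 * (((m - k : ℕ) : ℝ) + 1) ^ A) * hqq
      have hrefl : ∑ k ∈ range (m + 1), (((m - k : ℕ) : ℝ) + 1) ^ A = Sg := by
        have h := Finset.sum_range_reflect (fun j : ℕ => ((j : ℝ) + 1) ^ A) (m + 1)
        rw [hSgdef, ← h]
        simp only [Nat.add_sub_cancel]
      have f1 : coeff (R := ℝ) (m + 1) P * ((m : ℝ) + 1) ≤ 2 * a2 * q ^ (m + 1) * Sg := by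
        rw [hder, hconv, ← hrefl, Finset.mul_sum]
        exact Finset.sum_le_sum hterm
      have f2 : (A + 1) * Sg ≤ T * ((m : ℝ) + 2) := by
        have h := sum_rpow_le A (le_of_lt hA0) (m + 1)
        have hcast : (((m + 1 : ℕ) : ℝ) + 1) = (m : ℝ) + 2 := by push_cast; ring
        rw [hcast] at h
        have h2 : ((m : ℝ) + 2) ^ (A + 1) = T * ((m : ℝ) + 2) := by
          rw [hT, Real.rpow_add_one (by positivity : ((m:ℝ) + 2) ≠ 0)]
        rw [← h2]; exact h
      have f4 : 2 * a2 * ((m : ℝ) + 2) ≤ ((m : ℝ) + 1) * (A + 1) := by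
        have hm0 : (0:ℝ) ≤ (m : ℝ) := Nat.cast_nonneg m
        nlinarith
      have hfinal : coeff (R := ℝ) (m + 1) P * (((m : ℝ) + 1) * (A + 1))
          ≤ (T * q ^ (m + 1)) * (((m : ℝ) + 1) * (A + 1)) := by
        calc coeff (R := ℝ) (m + 1) P * (((m : ℝ) + 1) * (A + 1))
            = (coeff (R := ℝ) (m + 1) P * ((m : ℝ) + 1)) * (A + 1) := by ring
          _ ≤ (2 * a2 * q ^ (m + 1) * Sg) * (A + 1) :=
              mul_le_mul_of_nonneg_right f1 (by linarith)
          _ = 2 * a2 * q ^ (m + 1) * ((A + 1) * Sg) := by ring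
          _ ≤ 2 * a2 * q ^ (m + 1) * (T * ((m : ℝ) + 2)) :=
              mul_le_mul_of_nonneg_left f2 (by positivity)
          _ = (2 * a2 * ((m : ℝ) + 2)) * (T * q ^ (m + 1)) := by ring
          _ ≤ (((m : ℝ) + 1) * (A + 1)) * (T * q ^ (m + 1)) :=
              mul_le_mul_of_nonneg_right f4 (by positivity)
          _ = (T * q ^ (m + 1)) * (((m : ℝ) + 1) * (A + 1)) := by ring
      have hcast2 : (((m + 1 : ℕ) : ℝ) + 1) ^ A = T := by
        rw [hT]; congr 1; push_cast; ring
      have := le_of_mul_le_mul_right hfinal (by positivity)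
      rw [hcast2]
      exact this

lemma coeff_pow_self (n : ℕ) (hn : 1 ≤ n) (k : ℕ) : (k : ℝ) ≤ coeff (R := ℝ) n ((G n) ^ k) := by
  induction k with
  | zero =>
    rw [pow_zero, PowerSeries.coeff_one, if_neg (by omega)]
    norm_num
  | succ k ih =>
    rw [pow_succ, PowerSeries.coeff_mul]
    have hsub : ({(0, n), (n, 0)} : Finset (ℕ × ℕ)) ⊆ Finset.HasAntidiagonal.antidiagonal n := by
      intro p hp
      rcases Finset.mem_insert.mp hp with rfl | hp
      · exact Finset.HasAntidiagonal.mem_antidiagonal.mpr (by omega)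
      · rw [Finset.mem_singleton] at hp; subst hp
        exact Finset.HasAntidiagonal.mem_antidiagonal.mpr (by omega)
    have hne : ((0, n) : ℕ × ℕ) ≠ (n, 0) := by
      intro h
      rw [Prod.mk.injEq] at h
      omega
    have hle := Finset.sum_le_sum_of_subset_of_nonneg hsub
      (fun p _ _ => mul_nonneg (nonneg_G_pow n k p.1) (nonneg_G n p.2))
    rw [Finset.sum_pair hne] at hle
    have hv1 : coeff (R := ℝ) 0 ((G n) ^ k) = 1 := constantCoeff_G_pow n k
    have hv2 : coeff (R := ℝ) n (G n) = 1 := by rw [coeff_G, if_pos dvd_rfl]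
    have hv3 : coeff (R := ℝ) 0 (G n) = 1 := by rw [coeff_G, if_pos (dvd_zero n)]
    rw [hv1, hv2, hv3, one_mul, mul_one] at hle
    push_cast
    linarith

lemma lower_main (e : ℕ → ℕ) (n : ℕ) (hn : 1 ≤ n) :
    (e n : ℝ) ≤ coeff (R := ℝ) n (∏ i ∈ Icc 1 n, (G i) ^ (e i)) := by
  obtain ⟨m, rfl⟩ : ∃ m, n = m + 1 := ⟨n - 1, by omega⟩
  rw [Finset.prod_Icc_succ_top (by omega : 1 ≤ m + 1), PowerSeries.coeff_mul]
  have hQ0 : coeff (R := ℝ) 0 (∏ i ∈ Icc 1 m, (G i) ^ (e i)) = 1 := by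
    rw [coeff_zero_eq_constantCoeff, map_prod]
    refine Finset.prod_eq_one fun i _ => ?_
    rw [← coeff_zero_eq_constantCoeff_apply]
    exact constantCoeff_G_pow i (e i)
  have hmem : ((0, m + 1) : ℕ × ℕ) ∈ Finset.HasAntidiagonal.antidiagonal (m + 1) :=
    Finset.HasAntidiagonal.mem_antidiagonal.mpr (by omega)
  have hsingle := Finset.single_le_sum
    (f := fun p : ℕ × ℕ => coeff (R := ℝ) p.1 (∏ i ∈ Icc 1 m, (G i) ^ (e i)) *
      coeff (R := ℝ) p.2 ((G (m + 1)) ^ (e (m + 1))))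
    (fun p _ => mul_nonneg (nonneg_prod e _ _) (nonneg_G_pow _ _ _)) hmem
  simp only at hsingle
  rw [hQ0, one_mul] at hsingle
  exact le_trans (coeff_pow_self (m + 1) (by omega) (e (m + 1))) hsingle

end EulerAux

/-- Let `0 < a1 ≤ a2`, `q ≥ 2`, and let `(e_n)` be nonnegative integers with
`a1 q^n / n ≤ e_n ≤ a2 q^n / n` for all `n ≥ 1`.  Define `d_n` by
`∑ d_n x^n = ∏_{n≥1} (1 - x^n)^{-e_n}` (coefficientwise, `d_n` is the `x^n`-coefficient
of the truncated product `∏_{i=1}^n (1 - x^i)^{-e_i}`).  Then there are constants `A1`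
depending only on `a1` and `A2` depending only on `a2` such that
`(n+1)^{A1} q^n ≤ d_n ≤ (n+1)^{A2} q^n` for all `n ≥ 0`. -/
theorem euler_product_coefficient_bounds :
    ∃ A1 A2 : ℝ → ℝ,
      ∀ (a1 a2 q : ℝ), 0 < a1 → a1 ≤ a2 → 2 ≤ q →
      ∀ e : ℕ → ℕ,
        (∀ n : ℕ, 1 ≤ n → a1 * q ^ n / n ≤ (e n : ℝ) ∧ (e n : ℝ) ≤ a2 * q ^ n / n) →
        ∀ n : ℕ,
          ((n : ℝ) + 1) ^ (A1 a1) * q ^ n ≤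
              PowerSeries.coeff (R := ℝ) n
                (∏ i ∈ Finset.Icc 1 n, ((1 - PowerSeries.X ^ i)⁻¹) ^ e i) ∧
            PowerSeries.coeff (R := ℝ) n
                (∏ i ∈ Finset.Icc 1 n, ((1 - PowerSeries.X ^ i)⁻¹) ^ e i) ≤
              ((n : ℝ) + 1) ^ (A2 a2) * q ^ n := by
  refine ⟨fun a => min (Real.logb 2 a) 0 - 1, fun a => 4 * a, ?_⟩
  intro a1 a2 q ha1 h12 hq e he n
  have ha2 : 0 < a2 := lt_of_lt_of_le ha1 h12
  have hq0 : (0:ℝ) < q := by linarith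
  have hrw : (∏ i ∈ Finset.Icc 1 n, ((1 - PowerSeries.X ^ i)⁻¹) ^ e i)
      = ∏ i ∈ Finset.Icc 1 n, (EulerAux.G i) ^ (e i) :=
    Finset.prod_congr rfl fun i hi => by
      rw [EulerAux.G_eq i (Finset.mem_Icc.mp hi).1]
  have he2 : ∀ i : ℕ, 1 ≤ i → (i : ℝ) * e i ≤ a2 * q ^ i := by
    intro i hi
    have hi0 : (0:ℝ) < (i : ℝ) := by exact_mod_cast hi
    have h := (he i hi).2
    calc (i : ℝ) * e i ≤ (i : ℝ) * (a2 * q ^ i / i) :=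
        mul_le_mul_of_nonneg_left h (le_of_lt hi0)
      _ = a2 * q ^ i := by field_simp
  constructor
  · -- lower bound
    rw [hrw]
    rcases Nat.eq_zero_or_pos n with rfl | hn
    · rw [show (Finset.Icc 1 0 : Finset ℕ) = ∅ by rfl, Finset.prod_empty,
        PowerSeries.coeff_one, if_pos rfl]
      norm_num [Real.one_rpow]
    · have hlow : (e n : ℝ) ≤ PowerSeries.coeff (R := ℝ) n (∏ i ∈ Finset.Icc 1 n, (EulerAux.G i) ^ (e i)) :=
        EulerAux.lower_main e n hn
      have h1 := (he n hn).1
      have hn0 : (0:ℝ) < (n : ℝ) := by exact_mod_cast hn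
      have hrp : ((n : ℝ) + 1) ^ (min (Real.logb 2 a1) 0 - 1) * q ^ n ≤ a1 * q ^ n / n := by
        have hb1 : ((n : ℝ) + 1) ^ (min (Real.logb 2 a1) 0 - 1)
            = ((n : ℝ) + 1) ^ (min (Real.logb 2 a1) 0) * ((n : ℝ) + 1) ^ (-1 : ℝ) := by
          rw [← Real.rpow_add (by linarith)]
          ring_nf
        have hb2 : ((n : ℝ) + 1) ^ (min (Real.logb 2 a1) 0)
            ≤ (2 : ℝ) ^ (min (Real.logb 2 a1) 0) := by
          refine Real.rpow_le_rpow_of_nonpos two_pos ?_ (min_le_right _ _)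
          have : (1:ℝ) ≤ (n : ℝ) := by exact_mod_cast hn
          linarith
        have hb3 : (2 : ℝ) ^ (min (Real.logb 2 a1) 0) ≤ (2 : ℝ) ^ (Real.logb 2 a1) :=
          Real.rpow_le_rpow_of_exponent_le one_le_two (min_le_left _ _)
        have hb4 : (2 : ℝ) ^ (Real.logb 2 a1) = a1 :=
          Real.rpow_logb two_pos (by norm_num) ha1
        have hb5 : ((n : ℝ) + 1) ^ (-1 : ℝ) = ((n : ℝ) + 1)⁻¹ := Real.rpow_neg_one _
        have hb6 : ((n : ℝ) + 1)⁻¹ ≤ ((n : ℝ))⁻¹ := by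
          apply inv_anti₀ hn0
          linarith
        have hb7 : 0 ≤ ((n : ℝ) + 1) ^ (-1 : ℝ) := by
          rw [hb5]; positivity
        have hb8 : ((n : ℝ) + 1) ^ (min (Real.logb 2 a1) 0 - 1) ≤ a1 * ((n : ℝ))⁻¹ := by
          rw [hb1]
          calc ((n : ℝ) + 1) ^ (min (Real.logb 2 a1) 0) * ((n : ℝ) + 1) ^ (-1 : ℝ)
              ≤ a1 * ((n : ℝ) + 1) ^ (-1 : ℝ) := by
                refine mul_le_mul_of_nonneg_right ?_ hb7
                calc ((n : ℝ) + 1) ^ (min (Real.logb 2 a1) 0)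
                    ≤ (2 : ℝ) ^ (min (Real.logb 2 a1) 0) := hb2
                  _ ≤ a1 := le_of_le_of_eq hb3 hb4
            _ ≤ a1 * ((n : ℝ))⁻¹ := by
                rw [hb5]
                exact mul_le_mul_of_nonneg_left hb6 (le_of_lt ha1)
        calc ((n : ℝ) + 1) ^ (min (Real.logb 2 a1) 0 - 1) * q ^ n
            ≤ (a1 * ((n : ℝ))⁻¹) * q ^ n := mul_le_mul_of_nonneg_right hb8 (by positivity)
          _ = a1 * q ^ n / n := by field_simp
      linarith
  · -- upper bound
    rw [hrw]
    exact EulerAux.upper_main a2 q ha2 hq e he2 n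
end

section
/- Let 0 < a1 ≤ a2 be real numbers, let q ≥ 2 be a real number, and let e_1, e_2, … be non-negative integers satisfying a1 q^i / i ≤ e_i ≤ a2 q^i / i for all i ≥ 1. Define non-negative reals c_{i,j} by the two-variable formal power series identity ∑_{i,j} c_{i,j} x^i y^j = ∏_{i=1}^∞ (1 − x^i y)^{−e_i}. Then there exist constants C and D > 1, depending only on a1 and a2, such that for all integers n ≥ 1 and 0 ≤ m ≤ n: (∑_{j=m+1}^n c_{n,j}) / (∑_{j=0}^n c_{n,j}) ≤ n^C · D^{−m}. -/
open Finset

noncomputable section EulerTailAux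

namespace EulerTailAux

abbrev F2 := Fin 2 →₀ ℕ

def dd (a b : ℕ) : F2 := Finsupp.single 0 a + Finsupp.single 1 b

lemma dd_apply0 (a b : ℕ) : dd a b 0 = a := by simp [dd]
lemma dd_apply1 (a b : ℕ) : dd a b 1 = b := by simp [dd, Finsupp.single_apply]
lemma dd_repr (d : F2) : d = dd (d 0) (d 1) := by
  ext j; fin_cases j <;> simp [dd, Finsupp.single_apply]
lemma dd_eq_iff (a b : ℕ) (d : F2) : dd a b = d ↔ a = d 0 ∧ b = d 1 := by
  constructor
  · rintro rfl; simp [dd_apply0, dd_apply1]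
  · rintro ⟨rfl, rfl⟩; exact (dd_repr d).symm
lemma dd_eq_zero_iff (d : F2) : d = 0 ↔ d 0 = 0 ∧ d 1 = 0 := by
  constructor
  · rintro rfl; simp
  · rintro ⟨h0, h1⟩; rw [dd_repr d, h0, h1]; simp [dd]
lemma dd_le_iff (a b : ℕ) (d : F2) : dd a b ≤ d ↔ a ≤ d 0 ∧ b ≤ d 1 := by
  rw [Finsupp.le_def]
  constructor
  · intro h; exact ⟨by simpa [dd_apply0] using h 0, by simpa [dd_apply1] using h 1⟩
  · rintro ⟨h0, h1⟩ j; fin_cases j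
    · simpa [dd_apply0] using h0
    · simpa [dd_apply1] using h1
lemma sub_dd (d : F2) (a b : ℕ) : d - dd a b = dd (d 0 - a) (d 1 - b) := by
  ext j; fin_cases j <;> simp [dd, Finsupp.single_apply]

/-! ### The geometric series `S i = (1 - x^i y)⁻¹` -/

def S (i : ℕ) : MvPowerSeries (Fin 2) ℝ := fun d => if d 0 = i * d 1 then 1 else 0

lemma coeff_S (i : ℕ) (d : F2) :
    MvPowerSeries.coeff (R := ℝ) d (S i) = if d 0 = i * d 1 then 1 else 0 := rfl

lemma X_mul_eq (i : ℕ) :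
    ((MvPowerSeries.X (0 : Fin 2)) ^ i * MvPowerSeries.X 1 : MvPowerSeries (Fin 2) ℝ) =
      MvPowerSeries.monomial (R := ℝ) (dd i 1) 1 := by
  rw [MvPowerSeries.X_pow_eq, MvPowerSeries.X, MvPowerSeries.monomial_mul_monomial, mul_one]; rfl

lemma S_mul (i : ℕ) (hi : 1 ≤ i) :
    ((S i) * (1 - (MvPowerSeries.X (0 : Fin 2)) ^ i * MvPowerSeries.X 1) :
      MvPowerSeries (Fin 2) ℝ) = 1 := by
  ext d
  rw [mul_sub, mul_one, map_sub, X_mul_eq, MvPowerSeries.coeff_mul_monomial, coeff_S,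
    MvPowerSeries.coeff_one]
  rw [sub_dd, coeff_S, dd_apply0, dd_apply1]
  simp only [dd_le_iff, dd_eq_zero_iff, dd_apply0, dd_apply1]
  by_cases hb : d 1 = 0
  · simp only [hb, Nat.mul_zero, Nat.not_le.mpr Nat.zero_lt_one]
    by_cases ha : d 0 = 0 <;> simp [ha, hb]
  · have hb1 : 1 ≤ d 1 := Nat.one_le_iff_ne_zero.mpr hb
    by_cases ha : d 0 = i * d 1
    · have hd0 : d 0 ≠ 0 := by
        rw [ha]; exact Nat.mul_ne_zero (by omega) hb
      have h1' : i ≤ i * d 1 := Nat.le_mul_of_pos_right i (Nat.pos_of_ne_zero hb)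
      have h2' : i * d 1 - i = i * (d 1 - 1) := by rw [Nat.mul_sub, Nat.mul_one]
      simp [ha, hb1, h1', h2', hd0, hb]
    · have h2 : ¬(i ≤ d 0 ∧ 1 ≤ d 1 ∧ d 0 - i = i * (d 1 - 1)) := by
        rintro ⟨h1, h2', h3⟩
        apply ha
        have h4 : d 0 = i * (d 1 - 1) + i := by omega
        rw [h4, Nat.mul_sub, Nat.mul_one]
        have : i ≤ i * d 1 := Nat.le_mul_of_pos_right i (Nat.pos_of_ne_zero hb)
        omega
      have hd0' : ¬(d 0 = 0 ∧ d 1 = 0) := by rintro ⟨_, h⟩; exact hb h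
      simp only [ha, if_false, hd0', if_false]
      by_cases hle : i ≤ d 0 ∧ 1 ≤ d 1
      · have : ¬d 0 - i = i * (d 1 - 1) := fun h => h2 ⟨hle.1, hle.2, h⟩
        simp [hle, this]
      · simp [hle]

lemma inv_eq_S (i : ℕ) (hi : 1 ≤ i) :
    ((1 - (MvPowerSeries.X (0 : Fin 2)) ^ i * MvPowerSeries.X 1)⁻¹ :
      MvPowerSeries (Fin 2) ℝ) = S i := by
  rw [MvPowerSeries.inv_eq_iff_mul_eq_one]
  · exact S_mul i hi
  · have h : dd i 1 ≠ 0 := by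
      rw [Ne, dd_eq_zero_iff]; simp [dd_apply0, dd_apply1]
    rw [X_mul_eq, map_sub, map_one, ← MvPowerSeries.coeff_zero_eq_constantCoeff_apply]
    classical
    rw [MvPowerSeries.coeff_monomial]
    simp [h.symm]

/-! ### The truncated polynomial `T i N` -/

def T (i N : ℕ) : MvPolynomial (Fin 2) ℝ :=
  ∑ k ∈ range (N + 1), MvPolynomial.monomial (dd (i * k) k) 1

lemma coeff_T (i N : ℕ) (d : F2) :
    (T i N).coeff d = if d 0 = i * d 1 ∧ d 1 ≤ N then 1 else 0 := by
  classical
  rw [T, MvPolynomial.coeff_sum]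
  simp only [MvPolynomial.coeff_monomial]
  by_cases h : d 0 = i * d 1 ∧ d 1 ≤ N
  · rw [Finset.sum_eq_single (d 1)]
    · simp [dd_eq_iff, h.1, h.2]
    · intro k _ hk
      rw [if_neg]
      rw [dd_eq_iff]; rintro ⟨-, rfl⟩; exact hk rfl
    · intro hmem; exact absurd (Finset.mem_range.mpr (Nat.lt_succ_of_le h.2)) hmem
  · rw [if_neg h, Finset.sum_eq_zero]
    intro k hk
    rw [if_neg]
    rw [dd_eq_iff]
    rintro ⟨h1, rfl⟩
    exact h ⟨h1.symm, Nat.lt_succ_iff.mp (Finset.mem_range.mp hk)⟩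

def NN (p : MvPolynomial (Fin 2) ℝ) : Prop := ∀ d, 0 ≤ p.coeff d

lemma NN_mul {p q : MvPolynomial (Fin 2) ℝ} (hp : NN p) (hq : NN q) : NN (p * q) := by
  intro d
  classical
  rw [MvPolynomial.coeff_mul]
  exact Finset.sum_nonneg fun x _ => mul_nonneg (hp _) (hq _)

lemma NN_one : NN 1 := by
  intro d; classical
  rw [MvPolynomial.coeff_one]; split <;> norm_num

lemma NN_pow {p : MvPolynomial (Fin 2) ℝ} (hp : NN p) (e : ℕ) : NN (p ^ e) := by
  induction e with
  | zero => simpa using NN_one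
  | succ e ih => rw [pow_succ]; exact NN_mul ih hp

lemma NN_T (i N : ℕ) : NN (T i N) := by
  intro d; rw [coeff_T]; split <;> norm_num

lemma NN_prod {s : Finset ℕ} {f : ℕ → MvPolynomial (Fin 2) ℝ} (h : ∀ i ∈ s, NN (f i)) :
    NN (∏ i ∈ s, f i) := by
  classical
  induction s using Finset.induction_on with
  | empty => simpa using NN_one
  | insert _ _ hx ih =>
    rw [Finset.prod_insert hx]
    exact NN_mul (h _ (Finset.mem_insert_self _ _))
      (ih fun i hi => h i (Finset.mem_insert_of_mem hi))

lemma constCoeff_T (i N : ℕ) : (T i N).coeff 0 = 1 := by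
  rw [coeff_T]; simp

lemma coeff_dd_n1_T (n : ℕ) (hn : 1 ≤ n) : (T n n).coeff (dd n 1) = 1 := by
  rw [coeff_T, dd_apply0, dd_apply1]
  simp [hn]

lemma coeff_pow_ge (n : ℕ) (hn : 1 ≤ n) (e : ℕ) :
    (e : ℝ) ≤ (T n n ^ e).coeff (dd n 1) := by
  classical
  induction e with
  | zero =>
    simp only [pow_zero, Nat.cast_zero]
    have h : dd n 1 ≠ 0 := by rw [Ne, dd_eq_zero_iff, dd_apply1]; simp
    simp [MvPolynomial.coeff_one, h.symm, Ne.symm h]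
  | succ e ih =>
    rw [pow_succ, MvPolynomial.coeff_mul]
    have hδ : (dd n 1) ≠ 0 := by rw [Ne, dd_eq_zero_iff, dd_apply1]; simp
    have hpair : ({(dd n 1, (0 : F2)), ((0 : F2), dd n 1)} : Finset (F2 × F2)) ⊆
        Finset.HasAntidiagonal.antidiagonal (dd n 1) := by
      intro x hx
      simp only [Finset.mem_insert, Finset.mem_singleton] at hx
      rcases hx with rfl | rfl <;> simp
    have hne : (dd n 1, (0 : F2)) ≠ ((0 : F2), dd n 1) := by
      intro h; exact hδ (congrArg Prod.fst h)
    have hsum : ∑ x ∈ ({(dd n 1, (0 : F2)), ((0 : F2), dd n 1)} : Finset (F2 × F2)),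
        (T n n ^ e).coeff x.1 * (T n n).coeff x.2 ≤
        ∑ x ∈ Finset.HasAntidiagonal.antidiagonal (dd n 1), (T n n ^ e).coeff x.1 * (T n n).coeff x.2 := by
      apply Finset.sum_le_sum_of_subset_of_nonneg hpair
      intro x _ _
      exact mul_nonneg (NN_pow (NN_T n n) e _) (NN_T n n _)
    rw [Finset.sum_pair hne] at hsum
    have h0e : (T n n ^ e).coeff 0 = 1 := by
      rw [← MvPolynomial.constantCoeff_eq, map_pow, MvPolynomial.constantCoeff_eq, constCoeff_T,
        one_pow]
    simp only [h0e, constCoeff_T, coeff_dd_n1_T n hn, mul_one, one_mul] at hsum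
    push_cast
    linarith

/-! ### Low-degree agreement -/

def Low (N : ℕ) (f g : MvPowerSeries (Fin 2) ℝ) : Prop :=
  ∀ d : F2, d 0 ≤ N → MvPowerSeries.coeff (R := ℝ) d f = MvPowerSeries.coeff (R := ℝ) d g

lemma Low.mul {N : ℕ} {f₁ f₂ g₁ g₂ : MvPowerSeries (Fin 2) ℝ}
    (h₁ : Low N f₁ g₁) (h₂ : Low N f₂ g₂) : Low N (f₁ * f₂) (g₁ * g₂) := by
  intro d hd
  classical
  rw [MvPowerSeries.coeff_mul, MvPowerSeries.coeff_mul]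
  apply Finset.sum_congr rfl
  intro p hp
  rw [Finset.HasAntidiagonal.mem_antidiagonal] at hp
  have h0 : p.1 0 + p.2 0 = d 0 := by rw [← hp]; simp
  rw [h₁ _ (by omega), h₂ _ (by omega)]

lemma Low.pow {N : ℕ} {f g : MvPowerSeries (Fin 2) ℝ} (h : Low N f g) (e : ℕ) :
    Low N (f ^ e) (g ^ e) := by
  induction e with
  | zero => intro d hd; rw [pow_zero, pow_zero]
  | succ e ih => rw [pow_succ, pow_succ]; exact ih.mul h

lemma Low.prod {N : ℕ} {s : Finset ℕ} {f g : ℕ → MvPowerSeries (Fin 2) ℝ}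
    (h : ∀ i ∈ s, Low N (f i) (g i)) : Low N (∏ i ∈ s, f i) (∏ i ∈ s, g i) := by
  classical
  induction s using Finset.induction_on with
  | empty => intro d hd; rw [Finset.prod_empty, Finset.prod_empty]
  | insert _ _ hx ih =>
    rw [Finset.prod_insert hx, Finset.prod_insert hx]
    exact (h _ (Finset.mem_insert_self _ _)).mul
      (ih fun i hi => h i (Finset.mem_insert_of_mem hi))

lemma low_S_T (i n : ℕ) (hi : 1 ≤ i) :
    Low n (S i) ((T i n : MvPolynomial (Fin 2) ℝ) : MvPowerSeries (Fin 2) ℝ) := by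
  intro d hd
  rw [coeff_S, MvPolynomial.coeff_coe, coeff_T]
  by_cases h : d 0 = i * d 1
  · have h1 : d 1 ≤ n := by
      have : d 1 ≤ i * d 1 := Nat.le_mul_of_pos_left _ hi
      omega
    simp [h, h1]
  · simp [h]

lemma coeff_F_eq (n : ℕ) (e : ℕ → ℕ) (d : F2) (hd : d 0 ≤ n) :
    MvPowerSeries.coeff (R := ℝ) d
      (∏ i ∈ Icc 1 n, ((1 - (MvPowerSeries.X (0 : Fin 2)) ^ i * MvPowerSeries.X 1)⁻¹) ^ e i) =
    (∏ i ∈ Icc 1 n, (T i n) ^ e i).coeff d := by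
  have h1 : (∏ i ∈ Icc 1 n,
        ((1 - (MvPowerSeries.X (0 : Fin 2)) ^ i * MvPowerSeries.X 1)⁻¹) ^ e i)
      = ∏ i ∈ Icc 1 n, (S i) ^ e i := by
    apply Finset.prod_congr rfl
    intro i hi
    rw [inv_eq_S i (Finset.mem_Icc.mp hi).1]
  rw [h1, ← MvPolynomial.coeff_coe]
  have h2 : ((∏ i ∈ Icc 1 n, (T i n) ^ e i : MvPolynomial (Fin 2) ℝ) :
        MvPowerSeries (Fin 2) ℝ)
      = ∏ i ∈ Icc 1 n, ((T i n : MvPolynomial (Fin 2) ℝ) : MvPowerSeries (Fin 2) ℝ) ^ e i := by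
    rw [show ((∏ i ∈ Icc 1 n, (T i n) ^ e i : MvPolynomial (Fin 2) ℝ) :
          MvPowerSeries (Fin 2) ℝ)
        = MvPolynomial.coeToMvPowerSeries.ringHom (∏ i ∈ Icc 1 n, (T i n) ^ e i) from rfl,
      map_prod]
    exact Finset.prod_congr rfl fun i _ => by rw [map_pow]; rfl
  rw [h2]
  exact Low.prod (fun i hi => (low_S_T i n (Finset.mem_Icc.mp hi).1).pow (e i)) d hd

/-! ### Evaluation bounds -/

lemma prod_pow_dd (a b : ℕ) (w : Fin 2 → ℝ) : (∏ i, w i ^ (dd a b) i) = w 0 ^ a * w 1 ^ b := by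
  rw [Fin.prod_univ_two, dd_apply0, dd_apply1]

lemma window_le_eval (p : MvPolynomial (Fin 2) ℝ) (hp : NN p) (w : Fin 2 → ℝ)
    (hw : ∀ i, 0 ≤ w i) (n : ℕ) :
    ∑ j ∈ range (n + 1), p.coeff (dd n j) * (w 0 ^ n * w 1 ^ j) ≤ MvPolynomial.eval w p := by
  classical
  set g : F2 → ℝ := fun d => p.coeff d * ∏ i, w i ^ d i with hg_def
  have hg : ∀ d, 0 ≤ g d := fun d =>
    mul_nonneg (hp d) (Finset.prod_nonneg fun i _ => pow_nonneg (hw i) _)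
  have hinj : Set.InjOn (fun j => dd n j) (range (n + 1)) := by
    intro j _ j' _ h
    have := congrArg (fun d : F2 => d 1) h
    simpa [dd_apply1] using this
  have h1 : ∑ j ∈ range (n + 1), p.coeff (dd n j) * (w 0 ^ n * w 1 ^ j)
      = ∑ d ∈ (range (n + 1)).image (fun j => dd n j), g d := by
    rw [Finset.sum_image hinj]
    apply Finset.sum_congr rfl
    intro j _
    rw [hg_def]
    simp only []
    rw [prod_pow_dd]
  rw [h1]
  have h2 : ∑ d ∈ (range (n + 1)).image (fun j => dd n j), g d ≤
      ∑ d ∈ ((range (n + 1)).image (fun j => dd n j)) ∪ p.support, g d :=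
    Finset.sum_le_sum_of_subset_of_nonneg Finset.subset_union_left (fun d _ _ => hg d)
  have h3 : ∑ d ∈ ((range (n + 1)).image (fun j => dd n j)) ∪ p.support, g d
      = ∑ d ∈ p.support, g d := by
    apply (Finset.sum_subset Finset.subset_union_right ?_).symm
    intro d _ hd
    rw [hg_def]
    simp only []
    rw [MvPolynomial.notMem_support_iff.mp hd, zero_mul]
  rw [MvPolynomial.eval_eq']
  exact h2.trans (le_of_eq h3)

lemma finsupp_prod_dd (a b : ℕ) (w : Fin 2 → ℝ) :
    (dd a b).prod (fun i k => w i ^ k) = w 0 ^ a * w 1 ^ b := by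
  rw [dd, Finsupp.prod_add_index' (fun a => pow_zero _) (fun a b c => pow_add _ _ _)]
  simp [Finsupp.prod_single_index]

lemma eval_T (i n : ℕ) (w : Fin 2 → ℝ) :
    MvPolynomial.eval w (T i n) = ∑ k ∈ range (n + 1), (w 0 ^ i * w 1) ^ k := by
  rw [T, map_sum]
  apply Finset.sum_congr rfl
  intro k _
  rw [MvPolynomial.eval_monomial, finsupp_prod_dd, one_mul, mul_pow, ← pow_mul]

lemma eval_P (n : ℕ) (e : ℕ → ℕ) (w : Fin 2 → ℝ) :
    MvPolynomial.eval w (∏ i ∈ Icc 1 n, (T i n) ^ e i) =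
      ∏ i ∈ Icc 1 n, (∑ k ∈ range (n + 1), (w 0 ^ i * w 1) ^ k) ^ e i := by
  rw [map_prod]
  exact Finset.prod_congr rfl fun i _ => by rw [map_pow, eval_T]

/-! ### Real analysis lemmas -/

lemma mygeom_le (r : ℝ) (h0 : 0 ≤ r) (h1 : r < 1) (K : ℕ) :
    ∑ k ∈ range K, r ^ k ≤ (1 - r)⁻¹ := by
  have h2 : (0:ℝ) < 1 - r := by linarith
  rw [geom_sum_eq (ne_of_lt h1)]
  have h3 : (r ^ K - 1) / (r - 1) = (1 - r ^ K) / (1 - r) := by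
    rw [← neg_div_neg_eq]; ring_nf
  rw [h3, inv_eq_one_div]
  exact div_le_div₀ (by norm_num) (by nlinarith [pow_nonneg h0 K]) h2 le_rfl

lemma inv_one_sub_le_exp (x : ℝ) (h0 : 0 ≤ x) (h1 : x ≤ 3/4) :
    (1 - x)⁻¹ ≤ Real.exp (5/2 * x) := by
  have hx : (0:ℝ) < 1 - x := by linarith
  have h2 : 1 + 5/8 * x ≤ Real.exp (5/8 * x) := by
    have := Real.add_one_le_exp (5/8 * x); linarith
  have h3 : (1 + 5/8 * x) ^ 4 ≤ Real.exp (5/8 * x) ^ 4 :=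
    pow_le_pow_left₀ (by linarith) h2 4
  have h4 : Real.exp (5/8 * x) ^ 4 = Real.exp (5/2 * x) := by
    rw [← Real.exp_nat_mul]; congr 1; ring
  have h5 : (1:ℝ) ≤ (1 - x) * (1 + 5/8 * x) ^ 4 := by
    nlinarith [mul_nonneg h0 (sub_nonneg.mpr h1), sq_nonneg x,
      mul_nonneg (mul_nonneg h0 h0) (sub_nonneg.mpr h1),
      mul_nonneg (mul_nonneg (mul_nonneg h0 h0) h0) (sub_nonneg.mpr h1)]
  have h6 : (1 - x)⁻¹ ≤ (1 + 5/8 * x) ^ 4 := by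
    rw [inv_eq_one_div, div_le_iff₀ hx]
    nlinarith [h5]
  calc (1 - x)⁻¹ ≤ (1 + 5/8 * x) ^ 4 := h6
    _ ≤ Real.exp (5/8 * x) ^ 4 := h3
    _ = Real.exp (5/2 * x) := h4

lemma sum_inv_le (n : ℕ) : ∑ i ∈ Icc 1 n, (i:ℝ)⁻¹ ≤ 1 + Real.log n := by
  have h := harmonic_le_one_add_log n
  have h2 : ((harmonic n : ℚ) : ℝ) = ∑ i ∈ Icc 1 n, (i:ℝ)⁻¹ := by
    rw [harmonic_eq_sum_Icc]; push_cast; rfl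
  linarith [h2 ▸ h]

lemma prod_bound (n : ℕ) (q : ℝ) (hq : 2 ≤ q) (e : ℕ → ℕ) (a2 : ℝ) (ha2 : 0 ≤ a2)
    (he : ∀ i : ℕ, 1 ≤ i → (e i : ℝ) ≤ a2 * q ^ i / i) :
    ∏ i ∈ Icc 1 n, (∑ k ∈ range (n + 1), ((q⁻¹) ^ i * (3/2 : ℝ)) ^ k) ^ e i
      ≤ Real.exp (15/4 * a2 * (1 + Real.log n)) := by
  have hq0 : (0:ℝ) < q := by linarith
  have step : ∀ i ∈ Icc 1 n,
      (∑ k ∈ range (n + 1), ((q⁻¹) ^ i * (3/2 : ℝ)) ^ k) ^ e i ≤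
        Real.exp (15/4 * a2 * (i:ℝ)⁻¹) := by
    intro i hi
    obtain ⟨hi1, _⟩ := Finset.mem_Icc.mp hi
    have hi0 : (0:ℝ) < i := by exact_mod_cast hi1
    set r : ℝ := (q⁻¹) ^ i * (3/2 : ℝ) with hr_def
    have hr0 : 0 ≤ r := by positivity
    have hqi : (q⁻¹) ^ i ≤ (1/2 : ℝ) := by
      have hq1 : q⁻¹ ≤ 1/2 := by
        rw [inv_le_comm₀ (by linarith) (by norm_num)]; linarith
      have hq2 : (0:ℝ) ≤ q⁻¹ := by positivity
      calc (q⁻¹) ^ i ≤ q⁻¹ ^ 1 := pow_le_pow_of_le_one hq2 (by linarith) hi1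
        _ = q⁻¹ := pow_one _
        _ ≤ 1/2 := hq1
    have hr34 : r ≤ 3/4 := by
      rw [hr_def]; nlinarith
    have hr1 : r < 1 := by linarith
    have hsum : ∑ k ∈ range (n + 1), r ^ k ≤ (1 - r)⁻¹ := mygeom_le r hr0 hr1 _
    have hsum0 : (0:ℝ) ≤ ∑ k ∈ range (n + 1), r ^ k :=
      Finset.sum_nonneg fun k _ => pow_nonneg hr0 k
    have hexp : (1 - r)⁻¹ ≤ Real.exp (5/2 * r) := inv_one_sub_le_exp r hr0 hr34
    have h1 : (∑ k ∈ range (n + 1), r ^ k) ^ e i ≤ Real.exp (5/2 * r) ^ e i :=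
      pow_le_pow_left₀ hsum0 (hsum.trans hexp) _
    have h2 : Real.exp (5/2 * r) ^ e i = Real.exp (e i * (5/2 * r)) := by
      rw [← Real.exp_nat_mul]
    have h3 : (e i : ℝ) * (5/2 * r) ≤ 15/4 * a2 * (i:ℝ)⁻¹ := by
      have hei : (e i : ℝ) ≤ a2 * q ^ i / i := he i hi1
      have hqinv : (q⁻¹) ^ i = (q ^ i)⁻¹ := by rw [inv_pow]
      have hqpow : (0:ℝ) < q ^ i := pow_pos hq0 i
      have h4 : (e i : ℝ) * (q ^ i)⁻¹ ≤ a2 * (i:ℝ)⁻¹ := by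
        rw [← div_eq_mul_inv, ← div_eq_mul_inv, div_le_div_iff₀ hqpow hi0]
        have := mul_le_mul_of_nonneg_right hei (le_of_lt hqpow)
        calc (e i : ℝ) * i ≤ (a2 * q ^ i / i) * i := by
              apply mul_le_mul_of_nonneg_right hei (le_of_lt hi0)
          _ = a2 * q ^ i := by field_simp
      calc (e i : ℝ) * (5/2 * r) = 15/4 * ((e i : ℝ) * (q ^ i)⁻¹) := by
            rw [hr_def, hqinv]; ring
        _ ≤ 15/4 * (a2 * (i:ℝ)⁻¹) := by linarith
        _ = 15/4 * a2 * (i:ℝ)⁻¹ := by ring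
    calc (∑ k ∈ range (n + 1), r ^ k) ^ e i ≤ Real.exp ((e i : ℝ) * (5/2 * r)) := by
          rw [← h2]; exact h1
      _ ≤ Real.exp (15/4 * a2 * (i:ℝ)⁻¹) := Real.exp_le_exp.mpr h3
  calc ∏ i ∈ Icc 1 n, (∑ k ∈ range (n + 1), ((q⁻¹) ^ i * (3/2 : ℝ)) ^ k) ^ e i
      ≤ ∏ i ∈ Icc 1 n, Real.exp (15/4 * a2 * (i:ℝ)⁻¹) := by
        apply Finset.prod_le_prod
        · intro i _
          exact pow_nonneg (Finset.sum_nonneg fun k _ => pow_nonneg (by positivity) k) _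
        · exact step
    _ = Real.exp (∑ i ∈ Icc 1 n, 15/4 * a2 * (i:ℝ)⁻¹) := by rw [Real.exp_sum]
    _ ≤ Real.exp (15/4 * a2 * (1 + Real.log n)) := by
        apply Real.exp_le_exp.mpr
        rw [← Finset.mul_sum]
        exact mul_le_mul_of_nonneg_left (sum_inv_le n) (by linarith)

end EulerTailAux

end EulerTailAux

open EulerTailAux in
/-- Let `0 < a1 ≤ a2`, `q ≥ 2`, and let `(e_i)` be nonnegative integers with
`a1 q^i / i ≤ e_i ≤ a2 q^i / i` for all `i ≥ 1`.  Define `c_{i,j}` by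
`∑ c_{i,j} x^i y^j = ∏_{i≥1} (1 - x^i y)^{-e_i}` (coefficientwise, `c_{n,j}` is the
`x^n y^j`-coefficient of the truncated product `∏_{i=1}^n (1 - x^i y)^{-e_i}`).
Then there exist `C` and `D > 1` depending only on `a1, a2` such that for all
`0 ≤ m ≤ n` (with `n ≥ 1`),
`(∑_{j=m+1}^n c_{n,j}) / (∑_{j=0}^n c_{n,j}) ≤ n^C D^{-m}`. -/
theorem euler_product_y_power_tail_bound (a1 a2 : ℝ) (ha1 : 0 < a1) (ha12 : a1 ≤ a2) :
    ∃ C D : ℝ, 1 < D ∧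
      ∀ q : ℝ, 2 ≤ q →
      ∀ e : ℕ → ℕ,
        (∀ i : ℕ, 1 ≤ i → a1 * q ^ i / i ≤ (e i : ℝ) ∧ (e i : ℝ) ≤ a2 * q ^ i / i) →
        ∀ n m : ℕ, 1 ≤ n → m ≤ n →
          (∑ j ∈ Finset.Icc (m + 1) n,
              MvPowerSeries.coeff (R := ℝ) (Finsupp.single (0 : Fin 2) n + Finsupp.single 1 j)
                (∏ i ∈ Finset.Icc 1 n,
                  ((1 - (MvPowerSeries.X (0 : Fin 2)) ^ i * MvPowerSeries.X 1)⁻¹) ^ e i)) /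
            (∑ j ∈ Finset.range (n + 1),
              MvPowerSeries.coeff (R := ℝ) (Finsupp.single (0 : Fin 2) n + Finsupp.single 1 j)
                (∏ i ∈ Finset.Icc 1 n,
                  ((1 - (MvPowerSeries.X (0 : Fin 2)) ^ i * MvPowerSeries.X 1)⁻¹) ^ e i)) ≤
          (n : ℝ) ^ C * D ^ (-(m : ℝ)) := by
  classical
  have ha2 : (0:ℝ) < a2 := lt_of_lt_of_le ha1 ha12
  set β : ℝ := 15/4 * a2 with hβ
  have hβ0 : 0 ≤ β := by positivity
  set M : ℝ := max (Real.exp β / a1) 1 with hMdef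
  have hM1 : (1:ℝ) ≤ M := le_max_right _ _
  have hL : 0 ≤ Real.logb 2 M := Real.logb_nonneg one_lt_two hM1
  set C : ℝ := β + 1 + Real.logb 2 M with hCdef
  have hC0 : 0 ≤ C := by positivity
  refine ⟨C, 3/2, by norm_num, ?_⟩
  intro q hq e he n m hn hmn
  have hq0 : (0:ℝ) < q := by linarith
  have hn0 : (0:ℝ) < (n:ℝ) := by exact_mod_cast hn
  set P : MvPolynomial (Fin 2) ℝ := ∏ i ∈ Finset.Icc 1 n, (T i n) ^ e i with hP
  have hcoeff : ∀ j : ℕ,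
      MvPowerSeries.coeff (R := ℝ) (Finsupp.single (0 : Fin 2) n + Finsupp.single 1 j)
        (∏ i ∈ Finset.Icc 1 n,
          ((1 - (MvPowerSeries.X (0 : Fin 2)) ^ i * MvPowerSeries.X 1)⁻¹) ^ e i)
      = P.coeff (dd n j) := fun j =>
    coeff_F_eq n e (dd n j) (by rw [dd_apply0])
  simp only [hcoeff]
  have hNNP : NN P := NN_prod fun i _ => NN_pow (NN_T i n) _
  have hnn : ∀ j, 0 ≤ P.coeff (dd n j) := fun j => hNNP _
  -- lower bound for the `y^1` coefficient
  have hlow : (e n : ℝ) ≤ P.coeff (dd n 1) := by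
    have hmem : n ∈ Finset.Icc 1 n := Finset.mem_Icc.mpr ⟨hn, le_refl n⟩
    have hsplit : P = T n n ^ e n * ∏ i ∈ (Finset.Icc 1 n).erase n, T i n ^ e i :=
      (Finset.mul_prod_erase _ _ hmem).symm
    have hQ0 : (∏ i ∈ (Finset.Icc 1 n).erase n, T i n ^ e i).coeff 0 = 1 := by
      rw [← MvPolynomial.constantCoeff_eq, map_prod]
      apply Finset.prod_eq_one
      intro i _
      rw [map_pow, MvPolynomial.constantCoeff_eq, constCoeff_T, one_pow]
    have hQNN : NN (∏ i ∈ (Finset.Icc 1 n).erase n, T i n ^ e i) :=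
      NN_prod fun i _ => NN_pow (NN_T i n) _
    rw [hsplit, MvPolynomial.coeff_mul]
    have hmem2 : ((dd n 1, (0 : F2))) ∈ Finset.HasAntidiagonal.antidiagonal (dd n 1) := by simp
    calc (e n : ℝ) ≤ (T n n ^ e n).coeff (dd n 1) *
          (∏ i ∈ (Finset.Icc 1 n).erase n, T i n ^ e i).coeff 0 := by
          rw [hQ0, mul_one]; exact coeff_pow_ge n hn (e n)
      _ ≤ ∑ x ∈ Finset.HasAntidiagonal.antidiagonal (dd n 1),
            (T n n ^ e n).coeff x.1 *
              (∏ i ∈ (Finset.Icc 1 n).erase n, T i n ^ e i).coeff x.2 :=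
          Finset.single_le_sum
            (f := fun x : F2 × F2 => (T n n ^ e n).coeff x.1 *
              (∏ i ∈ (Finset.Icc 1 n).erase n, T i n ^ e i).coeff x.2)
            (fun x _ => mul_nonneg (NN_pow (NN_T n n) _ _) (hQNN _)) hmem2
  have heq : a1 * q ^ n / n ≤ (e n : ℝ) := (he n hn).1
  have hanq : (0:ℝ) < a1 * q ^ n / n := by
    apply div_pos (by positivity) hn0
  set Den : ℝ := ∑ j ∈ Finset.range (n + 1), P.coeff (dd n j) with hDen
  have hden_ge : a1 * q ^ n / n ≤ Den := by
    have h1 : P.coeff (dd n 1) ≤ Den :=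
      Finset.single_le_sum (fun j _ => hnn j) (Finset.mem_range.mpr (by omega))
    linarith
  have hden_pos : 0 < Den := lt_of_lt_of_le hanq hden_ge
  by_cases hn2 : 2 ≤ n
  · -- main case
    have hn2' : (2:ℝ) ≤ (n:ℝ) := by exact_mod_cast hn2
    set w : Fin 2 → ℝ := ![q⁻¹, 3/2] with hw
    have hw0 : w 0 = q⁻¹ := rfl
    have hw1 : w 1 = (3/2 : ℝ) := rfl
    have hwnn : ∀ i, 0 ≤ w i := by
      intro i
      have h : w i = q⁻¹ ∨ w i = 3/2 := by fin_cases i; exacts [Or.inl rfl, Or.inr rfl]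
      rcases h with h | h <;> rw [h] <;> positivity
    have hwin := window_le_eval P hNNP w hwnn n
    rw [hw0, hw1] at hwin
    have heval := eval_P n e w
    rw [hw0, hw1] at heval
    have hprod := prod_bound n q hq e a2 (le_of_lt ha2) (fun i hi => (he i hi).2)
    rw [hP] at hwin ⊢
    set B : ℝ := ∑ j ∈ Finset.range (n + 1),
        (∏ i ∈ Finset.Icc 1 n, (T i n) ^ e i).coeff (dd n j) * (3/2 : ℝ) ^ j with hB
    have hwin2 : (q⁻¹) ^ n * B ≤ Real.exp (β * (1 + Real.log n)) := by
      have h1 : ∑ j ∈ Finset.range (n + 1),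
          (∏ i ∈ Finset.Icc 1 n, (T i n) ^ e i).coeff (dd n j) *
            ((q⁻¹) ^ n * (3/2 : ℝ) ^ j) = (q⁻¹) ^ n * B := by
        rw [hB, Finset.mul_sum]
        apply Finset.sum_congr rfl
        intro j _
        ring
      calc (q⁻¹) ^ n * B = _ := h1.symm
        _ ≤ MvPolynomial.eval w (∏ i ∈ Finset.Icc 1 n, (T i n) ^ e i) := hwin
        _ = ∏ i ∈ Finset.Icc 1 n,
              (∑ k ∈ Finset.range (n + 1), ((q⁻¹) ^ i * (3/2 : ℝ)) ^ k) ^ e i := heval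
        _ ≤ Real.exp (15/4 * a2 * (1 + Real.log n)) := hprod
        _ = Real.exp (β * (1 + Real.log n)) := by rw [hβ]
    have hqn : (0:ℝ) < q ^ n := pow_pos hq0 n
    have hBle : B ≤ q ^ n * Real.exp (β * (1 + Real.log n)) := by
      have h1 : B = q ^ n * ((q⁻¹) ^ n * B) := by
        rw [inv_pow, ← mul_assoc, mul_inv_cancel₀ (ne_of_gt hqn), one_mul]
      rw [h1]
      exact mul_le_mul_of_nonneg_left hwin2 (le_of_lt hqn)
    have h32nn : (0:ℝ) ≤ (3/2 : ℝ) ^ (-(m:ℝ)) := Real.rpow_nonneg (by norm_num) _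
    have hNum : ∑ j ∈ Finset.Icc (m + 1) n,
        (∏ i ∈ Finset.Icc 1 n, (T i n) ^ e i).coeff (dd n j) ≤
        (3/2 : ℝ) ^ (-(m:ℝ)) * B := by
      calc ∑ j ∈ Finset.Icc (m + 1) n,
            (∏ i ∈ Finset.Icc 1 n, (T i n) ^ e i).coeff (dd n j)
          ≤ ∑ j ∈ Finset.Icc (m + 1) n, (3/2 : ℝ) ^ (-(m:ℝ)) *
              ((∏ i ∈ Finset.Icc 1 n, (T i n) ^ e i).coeff (dd n j) * (3/2 : ℝ) ^ j) := by
            apply Finset.sum_le_sum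
            intro j hj
            have hjm : m ≤ j := by
              have := (Finset.mem_Icc.mp hj).1; omega
            have hx : (1:ℝ) ≤ (3/2 : ℝ) ^ (-(m:ℝ)) * (3/2 : ℝ) ^ (j:ℕ) := by
              rw [← Real.rpow_natCast (3/2 : ℝ) j,
                ← Real.rpow_add (by norm_num : (0:ℝ) < 3/2)]
              apply Real.one_le_rpow (by norm_num)
              have : (m:ℝ) ≤ (j:ℝ) := by exact_mod_cast hjm
              linarith
            calc (∏ i ∈ Finset.Icc 1 n, (T i n) ^ e i).coeff (dd n j)
                = (∏ i ∈ Finset.Icc 1 n, (T i n) ^ e i).coeff (dd n j) * 1 := (mul_one _).symm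
              _ ≤ (∏ i ∈ Finset.Icc 1 n, (T i n) ^ e i).coeff (dd n j) *
                  ((3/2 : ℝ) ^ (-(m:ℝ)) * (3/2 : ℝ) ^ (j:ℕ)) :=
                  mul_le_mul_of_nonneg_left hx (hnn j)
              _ = (3/2 : ℝ) ^ (-(m:ℝ)) *
                  ((∏ i ∈ Finset.Icc 1 n, (T i n) ^ e i).coeff (dd n j) * (3/2 : ℝ) ^ j) := by
                  ring
        _ = (3/2 : ℝ) ^ (-(m:ℝ)) * ∑ j ∈ Finset.Icc (m + 1) n,
              (∏ i ∈ Finset.Icc 1 n, (T i n) ^ e i).coeff (dd n j) * (3/2 : ℝ) ^ j := by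
            rw [Finset.mul_sum]
        _ ≤ (3/2 : ℝ) ^ (-(m:ℝ)) * B := by
            apply mul_le_mul_of_nonneg_left _ h32nn
            apply Finset.sum_le_sum_of_subset_of_nonneg
            · intro x hx
              rw [Finset.mem_Icc] at hx
              rw [Finset.mem_range]
              omega
            · intro j _ _
              exact mul_nonneg (hnn j) (by positivity)
    -- numeric comparison
    have hMn : Real.exp β / a1 ≤ (n:ℝ) ^ Real.logb 2 M := by
      have h1 : (n:ℝ) ^ Real.logb 2 M = Real.exp (Real.log n * Real.logb 2 M) :=
        Real.rpow_def_of_pos hn0 _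
      have hlog : Real.log 2 ≤ Real.log n := Real.log_le_log (by norm_num) hn2'
      have hMpos : (0:ℝ) < M := lt_of_lt_of_le one_pos hM1
      have h3 : Real.logb 2 M * Real.log 2 = Real.log M := by
        rw [Real.logb]
        field_simp
      calc Real.exp β / a1 ≤ M := le_max_left _ _
        _ = Real.exp (Real.log M) := (Real.exp_log hMpos).symm
        _ ≤ Real.exp (Real.log n * Real.logb 2 M) := by
            apply Real.exp_le_exp.mpr
            rw [← h3]
            calc Real.logb 2 M * Real.log 2 ≤ Real.logb 2 M * Real.log n :=
                mul_le_mul_of_nonneg_left hlog hL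
              _ = Real.log n * Real.logb 2 M := mul_comm _ _
        _ = (n:ℝ) ^ Real.logb 2 M := h1.symm
    have hCsplit : (n:ℝ) ^ C = (n:ℝ) ^ (β:ℝ) * (n:ℝ) * (n:ℝ) ^ Real.logb 2 M := by
      rw [hCdef, Real.rpow_add hn0, Real.rpow_add hn0, Real.rpow_one]
    have hE : Real.exp (β * (1 + Real.log n)) = Real.exp β * (n:ℝ) ^ (β:ℝ) := by
      rw [Real.rpow_def_of_pos hn0, ← Real.exp_add]
      congr 1
      ring
    have hnbpos : (0:ℝ) < (n:ℝ) ^ (β:ℝ) := Real.rpow_pos_of_pos hn0 _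
    have key : q ^ n * (Real.exp β * (n:ℝ) ^ (β:ℝ)) ≤ (n:ℝ) ^ C * (a1 * q ^ n / n) := by
      have h9 : Real.exp β ≤ a1 * (n:ℝ) ^ Real.logb 2 M := by
        rw [← div_le_iff₀' ha1]
        exact hMn
      rw [hCsplit]
      calc q ^ n * (Real.exp β * (n:ℝ) ^ (β:ℝ))
          ≤ q ^ n * ((a1 * (n:ℝ) ^ Real.logb 2 M) * (n:ℝ) ^ (β:ℝ)) := by
            apply mul_le_mul_of_nonneg_left _ (le_of_lt hqn)
            exact mul_le_mul_of_nonneg_right h9 (le_of_lt hnbpos)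
        _ = (n:ℝ) ^ (β:ℝ) * (n:ℝ) * (n:ℝ) ^ Real.logb 2 M * (a1 * q ^ n / n) := by
            field_simp
    rw [div_le_iff₀ hden_pos]
    calc ∑ j ∈ Finset.Icc (m + 1) n,
          (∏ i ∈ Finset.Icc 1 n, (T i n) ^ e i).coeff (dd n j)
        ≤ (3/2 : ℝ) ^ (-(m:ℝ)) * B := hNum
      _ ≤ (3/2 : ℝ) ^ (-(m:ℝ)) * (q ^ n * Real.exp (β * (1 + Real.log n))) :=
          mul_le_mul_of_nonneg_left hBle h32nn
      _ = (3/2 : ℝ) ^ (-(m:ℝ)) * (q ^ n * (Real.exp β * (n:ℝ) ^ (β:ℝ))) := by rw [hE]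
      _ ≤ (3/2 : ℝ) ^ (-(m:ℝ)) * ((n:ℝ) ^ C * (a1 * q ^ n / n)) :=
          mul_le_mul_of_nonneg_left key h32nn
      _ ≤ (3/2 : ℝ) ^ (-(m:ℝ)) * ((n:ℝ) ^ C * Den) := by
          apply mul_le_mul_of_nonneg_left _ h32nn
          exact mul_le_mul_of_nonneg_left hden_ge (Real.rpow_nonneg (le_of_lt hn0) C)
      _ = (n:ℝ) ^ C * (3/2 : ℝ) ^ (-(m:ℝ)) * Den := by ring
  · -- n = 1
    have hn1 : n = 1 := by omega
    by_cases hm0 : m = 0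
    · subst hm0
      simp only [Nat.cast_zero, neg_zero, Real.rpow_zero, mul_one]
      have hsub : ∑ j ∈ Finset.Icc (0 + 1) n, P.coeff (dd n j) ≤ Den := by
        rw [hDen]
        apply Finset.sum_le_sum_of_subset_of_nonneg
        · intro x hx
          rw [Finset.mem_Icc] at hx
          rw [Finset.mem_range]
          omega
        · intro j _ _
          exact hnn j
      have h1 : ∑ j ∈ Finset.Icc (0 + 1) n, P.coeff (dd n j) / Den ≤ 1 := by
        rw [← Finset.sum_div]
        exact (div_le_one hden_pos).mpr hsub
      have h2 : (1:ℝ) ≤ (n:ℝ) ^ C := Real.one_le_rpow (by exact_mod_cast hn) hC0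
      calc (∑ j ∈ Finset.Icc (0 + 1) n, P.coeff (dd n j)) / Den
          ≤ 1 := (div_le_one hden_pos).mpr hsub
        _ ≤ (n:ℝ) ^ C := h2
    · have hm1 : m = 1 := by omega
      subst hm1; subst hn1
      rw [show Finset.Icc (1 + 1) 1 = (∅ : Finset ℕ) from Finset.Icc_eq_empty (by omega)]
      rw [Finset.sum_empty, zero_div]
      positivity
end

section
/- For a prime power q, let L_n(q) denote the set of monic polynomials P(x) ∈ F_q[x] of degree n with P(0) = (−1)^n. For every k > 0 there exists N such that for every integer n ≥ 2 and every prime power q, the number of P ∈ L_n(q) that have more than N·log n monic irreducible factors in F_q[x] (counted with multiplicity) is at most n^{−k} · |L_n(q)|. -/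
open Polynomial

variable {F : Type} [Field F] [Fintype F]

theorem dvd_X_pow_card (p : Polynomial F) (hm : p.Monic) (hi : Irreducible p) :
    p ∣ X ^ (Fintype.card F ^ p.natDegree) - X := by
  haveI := Fact.mk hi
  have hp0 : p ≠ 0 := hm.ne_zero
  let pb := AdjoinRoot.powerBasis hp0
  haveI : Module.Finite F (AdjoinRoot p) := pb.finite
  haveI : Finite (AdjoinRoot p) := Module.finite_of_finite F
  haveI : Fintype (AdjoinRoot p) := Fintype.ofFinite _
  have hcard : Fintype.card (AdjoinRoot p) = Fintype.card F ^ p.natDegree := by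
    rw [Module.card_eq_pow_finrank (K := F) (V := AdjoinRoot p), pb.finrank, AdjoinRoot.powerBasis_dim]
  have := FiniteField.pow_card (AdjoinRoot.root p)
  rw [hcard] at this
  have h0 : (Polynomial.aeval (AdjoinRoot.root p)) ((X : Polynomial F) ^ (Fintype.card F ^ p.natDegree) - X) = 0 := by
    simp [this]
  rw [AdjoinRoot.aeval_eq, AdjoinRoot.mk_eq_zero] at h0
  exact h0

theorem finite_natDegree_le (n : ℕ) : {P : Polynomial F | P.natDegree ≤ n}.Finite := by
  have h : Set.InjOn (fun P : Polynomial F => fun i : Fin (n+1) => P.coeff i)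
      {P : Polynomial F | P.natDegree ≤ n} := by
    intro P hP Q hQ h
    ext i
    by_cases hi : i ≤ n
    · have := congrFun h ⟨i, Nat.lt_succ_of_le hi⟩
      simpa using this
    · rw [Polynomial.coeff_eq_zero_of_natDegree_lt (lt_of_le_of_lt hP (by omega)),
        Polynomial.coeff_eq_zero_of_natDegree_lt (lt_of_le_of_lt hQ (by omega))]
  have : ((fun P : Polynomial F => fun i : Fin (n+1) => P.coeff i) ''
      {P : Polynomial F | P.natDegree ≤ n}).Finite := Set.toFinite _
  exact (Set.finite_image_iff h).mp this

theorem card_irred_mul_le (d : ℕ) (hd : 1 ≤ d) :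
    {p : Polynomial F | p.Monic ∧ Irreducible p ∧ p.natDegree = d}.ncard * d
      ≤ Fintype.card F ^ d := by
  classical
  set S := {p : Polynomial F | p.Monic ∧ Irreducible p ∧ p.natDegree = d} with hS
  have hfin : S.Finite := (finite_natDegree_le d).subset (fun p hp => le_of_eq hp.2.2)
  set T := hfin.toFinset with hT
  have hmem : ∀ p ∈ T, p.Monic ∧ Irreducible p ∧ p.natDegree = d := by
    intro p hp; rwa [hT, Set.Finite.mem_toFinset] at hp
  have hq : 1 < Fintype.card F := Fintype.one_lt_card
  have hg0 : ((X : Polynomial F) ^ (Fintype.card F) ^ d - X) ≠ 0 :=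
    FiniteField.X_pow_card_pow_sub_X_ne_zero F (by omega) hq
  have hdvd : (∏ p ∈ T, p) ∣ ((X : Polynomial F) ^ (Fintype.card F) ^ d - X) := by
    apply Finset.prod_dvd_of_coprime
    · intro p hp r hr hpr
      obtain ⟨hpm, hpi, hpd⟩ := hmem p (by simpa using hp)
      obtain ⟨hrm, hri, hrd⟩ := hmem r (by simpa using hr)
      refine hpi.coprime_iff_not_dvd.mpr (fun hdvd => hpr ?_)
      exact Polynomial.eq_of_monic_of_associated hpm hrm (hpi.associated_of_dvd hri hdvd)
    · intro p hp
      obtain ⟨hpm, hpi, hpd⟩ := hmem p hp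
      simpa [hpd] using dvd_X_pow_card p hpm hpi
  have hdeg := Polynomial.natDegree_le_of_dvd hdvd hg0
  rw [Polynomial.natDegree_prod _ _ (fun p hp => (hmem p hp).1.ne_zero)] at hdeg
  rw [FiniteField.X_pow_card_pow_sub_X_natDegree_eq F (by omega) hq] at hdeg
  have : ∑ p ∈ T, p.natDegree = T.card * d := by
    rw [Finset.sum_congr rfl (fun p hp => (hmem p hp).2.2), Finset.sum_const, smul_eq_mul]
  rw [this] at hdeg
  rwa [Set.ncard_eq_toFinset_card _ hfin]

theorem count_monic_le (n : ℕ) (hn : 1 ≤ n) (c : F) :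
    {P : Polynomial F | P.Monic ∧ P.natDegree = n ∧ P.eval 0 = c}.ncard
      ≤ Fintype.card F ^ (n-1) := by
  classical
  set S := {P : Polynomial F | P.Monic ∧ P.natDegree = n ∧ P.eval 0 = c} with hS
  have hinj : Set.InjOn (fun P : Polynomial F => fun i : Fin (n-1) => P.coeff (i+1)) S := by
    intro P hP Q hQ h
    obtain ⟨hPm, hPd, hPe⟩ := hP
    obtain ⟨hQm, hQd, hQe⟩ := hQ
    have he : P.coeff 0 = Q.coeff 0 := by
      rw [← Polynomial.coeff_zero_eq_eval_zero] at hPe hQe; rw [hPe, hQe]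
    ext j
    rcases Nat.eq_zero_or_pos j with hj | hj
    · subst hj; exact he
    · by_cases hjn : j < n
      · have := congrFun h ⟨j - 1, by omega⟩
        simpa [Nat.sub_add_cancel hj] using this
      · by_cases hje : j = n
        · subst hje
          rw [← hPd, hPm.coeff_natDegree, hPd, ← hQd, hQm.coeff_natDegree]
        · rw [Polynomial.coeff_eq_zero_of_natDegree_lt (by omega : P.natDegree < j),
            Polynomial.coeff_eq_zero_of_natDegree_lt (by omega : Q.natDegree < j)]
  calc S.ncard = ((fun P : Polynomial F => fun i : Fin (n-1) => P.coeff (i+1)) '' S).ncard :=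
        (Set.ncard_image_of_injOn hinj).symm
    _ ≤ (Set.univ : Set (Fin (n-1) → F)).ncard :=
        Set.ncard_le_ncard (Set.subset_univ _) (Set.toFinite _)
    _ = Fintype.card F ^ (n-1) := by
        rw [Set.ncard_univ, Nat.card_eq_fintype_card, Fintype.card_fun, Fintype.card_fin]

theorem factor_facts (d : ℕ) (hd : 1 ≤ d) :
    0 < 1 - Real.sqrt 2 * ((Fintype.card F : ℝ) ^ d)⁻¹ ∧
    Real.sqrt 2 * ((Fintype.card F : ℝ) ^ d)⁻¹ ≤ 3/4 ∧
    1 ≤ (1 - Real.sqrt 2 * ((Fintype.card F : ℝ) ^ d)⁻¹)⁻¹ := by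
  have hq : (2 : ℝ) ≤ Fintype.card F := by exact_mod_cast Fintype.one_lt_card
  have hpow : (2 : ℝ) ≤ (Fintype.card F : ℝ) ^ d := by
    calc (2:ℝ) = 2 ^ 1 := by norm_num
    _ ≤ (2:ℝ) ^ d := by exact pow_le_pow_right₀ (by norm_num) hd
    _ ≤ (Fintype.card F : ℝ) ^ d := by exact pow_le_pow_left₀ (by norm_num) hq d
  have hpos : (0:ℝ) < (Fintype.card F : ℝ) ^ d := by linarith
  have hinv : ((Fintype.card F : ℝ) ^ d)⁻¹ ≤ 1/2 := by
    rw [inv_le_comm₀ hpos (by norm_num)]; linarith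
  have hinvpos : (0:ℝ) < ((Fintype.card F : ℝ) ^ d)⁻¹ := by positivity
  have hsqrt : Real.sqrt 2 ≤ 3/2 := by
    nlinarith [Real.sq_sqrt (by norm_num : (2:ℝ) ≥ 0), Real.sqrt_nonneg 2]
  have hsqrtpos : 0 < Real.sqrt 2 := Real.sqrt_pos.mpr (by norm_num)
  have h34 : Real.sqrt 2 * ((Fintype.card F : ℝ) ^ d)⁻¹ ≤ 3/4 := by nlinarith
  have h0 : 0 < 1 - Real.sqrt 2 * ((Fintype.card F : ℝ) ^ d)⁻¹ := by nlinarith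
  refine ⟨h0, h34, ?_⟩
  rw [one_le_inv_iff₀]
  constructor
  · exact h0
  · nlinarith

theorem list_prod_facts (L : List (Polynomial F))
    (hL : ∀ p ∈ L, p.Monic ∧ Irreducible p) :
    1 ≤ (L.map (fun p => (1 - Real.sqrt 2 * ((Fintype.card F : ℝ) ^ p.natDegree)⁻¹)⁻¹)).prod := by
  induction L with
  | nil => simp
  | cons p L' ih =>
    have hp := hL p List.mem_cons_self
    have hd : 1 ≤ p.natDegree := natDegree_pos_iff_degree_pos.mpr
      (Polynomial.degree_pos_of_irreducible hp.2)
    have hf := factor_facts (F := F) p.natDegree hd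
    have h' := ih (fun r hr => hL r (List.mem_cons_of_mem p hr))
    simp only [List.map_cons, List.prod_cons]
    calc (1:ℝ) = 1 * 1 := by norm_num
    _ ≤ _ := mul_le_mul hf.2.2 h' (by norm_num) (by linarith [hf.2.2])

variable [DecidableEq F]

def SB (n t : ℕ) (L : List (Polynomial F)) (c : F) : Set (Polynomial F) :=
  {P : Polynomial F | P.Monic ∧ P.natDegree = n ∧ P.eval 0 = c ∧
    t < Multiset.card (UniqueFactorizationMonoid.normalizedFactors P) ∧
    ∀ r ∈ UniqueFactorizationMonoid.normalizedFactors P, r ∈ L}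

theorem SB_finite (n t : ℕ) (L : List (Polynomial F)) (c : F) : (SB n t L c).Finite :=
  (finite_natDegree_le n).subset (fun P hP => le_of_eq hP.2.1)

open UniqueFactorizationMonoid in
theorem main_count : ∀ (t n : ℕ) (L : List (Polynomial F)) (c : F), c ≠ 0 → 1 ≤ n →
    (∀ p ∈ L, p.Monic ∧ Irreducible p) →
    ((SB n t L c).ncard : ℝ)
      ≤ (Fintype.card F : ℝ) ^ (n - 1) * (Real.sqrt 2)⁻¹ ^ t *
        (L.map (fun p => (1 - Real.sqrt 2 * ((Fintype.card F : ℝ) ^ p.natDegree)⁻¹)⁻¹)).prod := by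
  intro t
  induction t with
  | zero =>
    intro n L c hc hn hL
    have hsub : SB n 0 L c ⊆ {P : Polynomial F | P.Monic ∧ P.natDegree = n ∧ P.eval 0 = c} :=
      fun P hP => ⟨hP.1, hP.2.1, hP.2.2.1⟩
    have h1 : (SB n 0 L c).ncard ≤ Fintype.card F ^ (n-1) :=
      le_trans (Set.ncard_le_ncard hsub ((finite_natDegree_le n).subset
        (fun P hP => le_of_eq hP.2.1))) (count_monic_le n hn c)
    have h2 : ((SB n 0 L c).ncard : ℝ) ≤ (Fintype.card F : ℝ) ^ (n-1) := by exact_mod_cast h1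
    have h3 := list_prod_facts L hL
    have hqpos : (0:ℝ) < (Fintype.card F : ℝ) ^ (n-1) := by
      have : (0:ℝ) < Fintype.card F := by positivity
      positivity
    calc ((SB n 0 L c).ncard : ℝ) ≤ (Fintype.card F : ℝ) ^ (n-1) := h2
      _ ≤ (Fintype.card F : ℝ) ^ (n-1) *
            (L.map (fun p => (1 - Real.sqrt 2 * ((Fintype.card F : ℝ) ^ p.natDegree)⁻¹)⁻¹)).prod :=
          le_mul_of_one_le_right hqpos.le h3
      _ = _ := by rw [pow_zero, mul_one]
  | succ t iht =>
    intro n L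
    induction L generalizing n with
    | nil =>
      intro c hc hn hL
      have hempty : SB n (t+1) [] c = ∅ := by
        ext P
        simp only [SB, Set.mem_setOf_eq, Set.mem_empty_iff_false, iff_false, not_and]
        intro _ _ _ hcard hmem
        have hpos : 0 < Multiset.card (UniqueFactorizationMonoid.normalizedFactors P) := by omega
        obtain ⟨r, hr⟩ := Multiset.card_pos_iff_exists_mem.mp hpos
        exact absurd (hmem r hr) List.not_mem_nil
      rw [hempty]
      simp only [Set.ncard_empty, Nat.cast_zero, List.map_nil, List.prod_nil, mul_one]
      positivity
    | cons p L' ihL =>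
      intro c hc hn hL
      classical
      have hpmem := hL p List.mem_cons_self
      have hpm : p.Monic := hpmem.1
      have hpi : Irreducible p := hpmem.2
      have hL' : ∀ r ∈ L', r.Monic ∧ Irreducible r :=
        fun r hr => hL r (List.mem_cons_of_mem p hr)
      have hd : 1 ≤ p.natDegree :=
        natDegree_pos_iff_degree_pos.mpr (Polynomial.degree_pos_of_irreducible hpi)
      have hq2 : (2:ℝ) ≤ (Fintype.card F : ℝ) := by
        have h1 : 1 < Fintype.card F := Fintype.one_lt_card
        exact_mod_cast h1
      have hff := factor_facts (F := F) p.natDegree hd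
      set S₁ : Set (Polynomial F) := SB n (t+1) (p :: L') c ∩ {P | ¬ p ∣ P} with hS₁
      set S₂ : Set (Polynomial F) := SB n (t+1) (p :: L') c ∩ {P | p ∣ P} with hS₂
      have hcover : SB n (t+1) (p :: L') c ⊆ S₁ ∪ S₂ := by
        intro P hP
        by_cases hdvd : p ∣ P
        · exact Or.inr ⟨hP, hdvd⟩
        · exact Or.inl ⟨hP, hdvd⟩
      have hsub1 : S₁ ⊆ SB n (t+1) L' c := by
        rintro P ⟨hP, hnd⟩
        refine ⟨hP.1, hP.2.1, hP.2.2.1, hP.2.2.2.1, fun r hr => ?_⟩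
        rcases List.mem_cons.mp (hP.2.2.2.2 r hr) with h | h
        · exfalso
          exact hnd (h ▸ UniqueFactorizationMonoid.dvd_of_mem_normalizedFactors hr)
        · exact h
      have hS2struct : ∀ P ∈ S₂, P = p * (P /ₘ p) ∧ (P /ₘ p).Monic ∧
          (P /ₘ p).natDegree = n - p.natDegree ∧ p.natDegree < n ∧
          p.eval 0 ≠ 0 ∧ (P /ₘ p).eval 0 = c * (p.eval 0)⁻¹ ∧
          t < Multiset.card (UniqueFactorizationMonoid.normalizedFactors (P /ₘ p)) ∧
          ∀ r ∈ UniqueFactorizationMonoid.normalizedFactors (P /ₘ p), r ∈ p :: L' := by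
        rintro P ⟨⟨hPm, hPdeg, hPev, hPcard, hPfac⟩, hdvd⟩
        have hmod : P %ₘ p = 0 := (Polynomial.modByMonic_eq_zero_iff_dvd hpm).mpr hdvd
        have hPQ : P = p * (P /ₘ p) := by
          conv_lhs => rw [← Polynomial.modByMonic_add_div P p]
          rw [hmod, zero_add]
        have hQm : (P /ₘ p).Monic := by
          refine Polynomial.Monic.of_mul_monic_left hpm ?_
          rwa [← hPQ]
        have hdegs : p.natDegree + (P /ₘ p).natDegree = n := by
          have h := hpm.natDegree_mul hQm
          rw [← hPQ] at h
          omega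
        have hnf : UniqueFactorizationMonoid.normalizedFactors P =
            p ::ₘ UniqueFactorizationMonoid.normalizedFactors (P /ₘ p) := by
          conv_lhs => rw [hPQ]
          rw [UniqueFactorizationMonoid.normalizedFactors_mul hpm.ne_zero hQm.ne_zero,
            UniqueFactorizationMonoid.normalizedFactors_irreducible hpi,
            hpm.normalize_eq_self, Multiset.singleton_add]
        have hcardQ : t < Multiset.card (UniqueFactorizationMonoid.normalizedFactors (P /ₘ p)) := by
          rw [hnf, Multiset.card_cons] at hPcard; omega
        have hQne1 : (P /ₘ p).natDegree ≠ 0 := by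
          intro h0
          have h1 : (P /ₘ p) = 1 := hQm.natDegree_eq_zero.mp h0
          rw [h1, UniqueFactorizationMonoid.normalizedFactors_one] at hcardQ
          simp at hcardQ
        have hdn : p.natDegree < n := by omega
        have hevmul : p.eval 0 * (P /ₘ p).eval 0 = c := by
          have h := congrArg (Polynomial.eval 0) hPQ
          rw [Polynomial.eval_mul] at h
          rw [← h]; exact hPev
        have hpe0 : p.eval 0 ≠ 0 := by
          intro h; rw [h, zero_mul] at hevmul; exact hc hevmul.symm
        refine ⟨hPQ, hQm, by omega, hdn, hpe0, ?_, hcardQ, ?_⟩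
        · field_simp
          rw [mul_comm] at hevmul
          exact hevmul
        · intro r hr
          exact hPfac r (by rw [hnf]; exact Multiset.mem_cons_of_mem hr)
      by_cases hS2e : S₂ = ∅
      · -- no element divisible by p
        have hsub : SB n (t+1) (p :: L') c ⊆ SB n (t+1) L' c := by
          intro P hP
          rcases hcover hP with h | h
          · exact hsub1 h
          · rw [hS2e] at h; exact absurd h (Set.notMem_empty P)
        have hb := ihL n c hc hn hL'
        have hmono : ((SB n (t+1) (p :: L') c).ncard : ℝ) ≤ ((SB n (t+1) L' c).ncard : ℝ) := by
          exact_mod_cast Set.ncard_le_ncard hsub (SB_finite n (t+1) L' c)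
        refine le_trans (le_trans hmono hb) ?_
        simp only [List.map_cons, List.prod_cons]
        have hprod := list_prod_facts L' hL'
        have hXnn : (0:ℝ) ≤ (Fintype.card F : ℝ) ^ (n-1) * (Real.sqrt 2)⁻¹ ^ (t+1) := by
          positivity
        exact mul_le_mul_of_nonneg_left
          (le_mul_of_one_le_left (by linarith) hff.2.2) hXnn
      · -- some element divisible by p
        obtain ⟨P₀, hP₀⟩ := Set.nonempty_iff_ne_empty.mpr hS2e
        obtain ⟨_, _, _, hdn₀, hpe0, _, _, _⟩ := hS2struct P₀ hP₀
        have hc' : c * (p.eval 0)⁻¹ ≠ 0 := by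
          simp [hc, hpe0]
        have hmaps : ∀ P ∈ S₂, P /ₘ p ∈ SB (n - p.natDegree) t (p :: L') (c * (p.eval 0)⁻¹) := by
          intro P hP
          obtain ⟨_, hQm, hQdeg, _, _, hQev, hQcard, hQfac⟩ := hS2struct P hP
          exact ⟨hQm, hQdeg, hQev, hQcard, hQfac⟩
        have hinj : Set.InjOn (· /ₘ p) S₂ := by
          intro P₁ h₁ P₂ h₂ heq
          have e₁ := (hS2struct P₁ h₁).1
          have e₂ := (hS2struct P₂ h₂).1
          have heq' : P₁ /ₘ p = P₂ /ₘ p := heq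
          rw [e₁, e₂, heq']
        have hcard2 : ((S₂.ncard : ℝ)) ≤
            ((SB (n - p.natDegree) t (p :: L') (c * (p.eval 0)⁻¹)).ncard : ℝ) := by
          exact_mod_cast Set.ncard_le_ncard_of_injOn (· /ₘ p) hmaps hinj
            (SB_finite _ _ _ _)
        have hb2 := iht (n - p.natDegree) (p :: L') (c * (p.eval 0)⁻¹) hc' (by omega) hL
        have hb1 := ihL n c hc hn hL'
        have hcard1 : ((S₁.ncard : ℝ)) ≤ ((SB n (t+1) L' c).ncard : ℝ) := by
          exact_mod_cast Set.ncard_le_ncard hsub1 (SB_finite _ _ _ _)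
        have hunion : ((SB n (t+1) (p :: L') c).ncard : ℝ) ≤ (S₁.ncard : ℝ) + (S₂.ncard : ℝ) := by
          have hfin1 : S₁.Finite := (SB_finite n (t+1) (p::L') c).subset Set.inter_subset_left
          have hfin2 : S₂.Finite := (SB_finite n (t+1) (p::L') c).subset Set.inter_subset_left
          have h1 : (SB n (t+1) (p :: L') c).ncard ≤ (S₁ ∪ S₂).ncard :=
            Set.ncard_le_ncard hcover (hfin1.union hfin2)
          have h2 := Set.ncard_union_le S₁ S₂
          exact_mod_cast le_trans h1 h2
        have hpow : (Fintype.card F : ℝ) ^ (n-1)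
            = (Fintype.card F : ℝ) ^ (n - p.natDegree - 1) * (Fintype.card F : ℝ) ^ p.natDegree := by
          rw [← pow_add]; congr 1; omega
        have hDne : ((Fintype.card F : ℝ) ^ p.natDegree) ≠ 0 := by positivity
        have hxne : Real.sqrt 2 ≠ 0 := by positivity
        have hdenne : 1 - Real.sqrt 2 * ((Fintype.card F : ℝ) ^ p.natDegree)⁻¹ ≠ 0 :=
          ne_of_gt hff.1
        calc ((SB n (t+1) (p :: L') c).ncard : ℝ) ≤ (S₁.ncard : ℝ) + (S₂.ncard : ℝ) := hunion
          _ ≤ ((Fintype.card F : ℝ) ^ (n-1) * (Real.sqrt 2)⁻¹ ^ (t+1) *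
                (L'.map (fun r => (1 - Real.sqrt 2 * ((Fintype.card F:ℝ) ^ r.natDegree)⁻¹)⁻¹)).prod)
              + ((Fintype.card F : ℝ) ^ (n - p.natDegree - 1) * (Real.sqrt 2)⁻¹ ^ t *
                ((p :: L').map (fun r => (1 - Real.sqrt 2 * ((Fintype.card F:ℝ) ^ r.natDegree)⁻¹)⁻¹)).prod) :=
              add_le_add (le_trans hcard1 hb1) (le_trans hcard2 hb2)
          _ = _ := by
              simp only [List.map_cons, List.prod_cons]
              rw [hpow, pow_succ]
              have hDpos : (0:ℝ) < (Fintype.card F : ℝ) ^ p.natDegree := by positivity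
              have hsub2 : (0:ℝ) < (Fintype.card F : ℝ) ^ p.natDegree - Real.sqrt 2 := by
                have h := mul_pos hDpos hff.1
                have h2 : (Fintype.card F : ℝ) ^ p.natDegree *
                    (1 - Real.sqrt 2 * ((Fintype.card F : ℝ) ^ p.natDegree)⁻¹)
                    = (Fintype.card F : ℝ) ^ p.natDegree - Real.sqrt 2 := by
                  field_simp
                linarith [h2 ▸ h]
              have hstne : (Real.sqrt 2) ^ t ≠ 0 := by positivity
              field_simp
              ring

theorem irr_set_finite (n : ℕ) :
    {p : Polynomial F | p.Monic ∧ Irreducible p ∧ p.natDegree ≤ n}.Finite :=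
  (finite_natDegree_le n).subset (fun _ hp => hp.2.2)

theorem sum_wt_le (n : ℕ) (hn : 1 ≤ n) :
    ∑ p ∈ (irr_set_finite (F := F) n).toFinset, ((Fintype.card F : ℝ) ^ p.natDegree)⁻¹
      ≤ 1 + Real.log n := by
  classical
  set T := (irr_set_finite (F := F) n).toFinset with hT
  have hmaps : ∀ p ∈ T, p.natDegree ∈ Finset.Icc 1 n := by
    intro p hp
    rw [hT, Set.Finite.mem_toFinset] at hp
    exact Finset.mem_Icc.mpr ⟨natDegree_pos_iff_degree_pos.mpr
      (Polynomial.degree_pos_of_irreducible hp.2.1), hp.2.2⟩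
  rw [← Finset.sum_fiberwise_of_maps_to hmaps]
  have hstep : ∀ d ∈ Finset.Icc 1 n,
      ∑ p ∈ T.filter (fun p => p.natDegree = d), ((Fintype.card F : ℝ) ^ p.natDegree)⁻¹
        ≤ ((d : ℝ))⁻¹ := by
    intro d hd
    obtain ⟨hd1, hdn⟩ := Finset.mem_Icc.mp hd
    have hsetEq : (T.filter (fun p => p.natDegree = d) : Set (Polynomial F))
        = {p : Polynomial F | p.Monic ∧ Irreducible p ∧ p.natDegree = d} := by
      ext p
      simp only [Finset.coe_filter, Set.mem_setOf_eq, hT, Set.Finite.mem_toFinset]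
      constructor
      · rintro ⟨⟨h1, h2, _⟩, h4⟩; exact ⟨h1, h2, h4⟩
      · rintro ⟨h1, h2, h3⟩; exact ⟨⟨h1, h2, h3 ▸ hdn⟩, h3⟩
    have hcard : (T.filter (fun p => p.natDegree = d)).card * d ≤ Fintype.card F ^ d := by
      have := card_irred_mul_le (F := F) d hd1
      rwa [← hsetEq, Set.ncard_coe_finset] at this
    have hsum : ∑ p ∈ T.filter (fun p => p.natDegree = d),
        ((Fintype.card F : ℝ) ^ p.natDegree)⁻¹
        = (T.filter (fun p => p.natDegree = d)).card * ((Fintype.card F : ℝ) ^ d)⁻¹ := by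
      rw [Finset.sum_congr rfl (fun p hp => by
        rw [(Finset.mem_filter.mp hp).2]), Finset.sum_const, nsmul_eq_mul]
    rw [hsum]
    have hqpos : (0:ℝ) < (Fintype.card F : ℝ) ^ d := by
      have : 0 < Fintype.card F := Fintype.card_pos
      positivity
    have hdpos : (0:ℝ) < (d:ℝ) := by exact_mod_cast hd1
    rw [← div_eq_mul_inv, div_le_iff₀ hqpos]
    have hc' : ((T.filter (fun p => p.natDegree = d)).card : ℝ) * d ≤ (Fintype.card F : ℝ) ^ d := by
      exact_mod_cast hcard
    rw [inv_mul_eq_div, le_div_iff₀ hdpos]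
    exact hc'
  calc ∑ d ∈ Finset.Icc 1 n, ∑ p ∈ T.filter (fun p => p.natDegree = d),
        ((Fintype.card F : ℝ) ^ p.natDegree)⁻¹
      ≤ ∑ d ∈ Finset.Icc 1 n, ((d:ℝ))⁻¹ := Finset.sum_le_sum hstep
    _ = ((harmonic n : ℚ) : ℝ) := by
        rw [← Finset.Ico_add_one_right_eq_Icc, Finset.sum_Ico_eq_sum_range]
        push_cast [harmonic]
        apply Finset.sum_congr (by norm_num)
        intro i _
        norm_num [add_comm]
    _ ≤ 1 + Real.log n := by exact_mod_cast harmonic_le_one_add_log n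

theorem prod_bound (n : ℕ) (hn : 1 ≤ n) :
    ∏ p ∈ (irr_set_finite (F := F) n).toFinset,
        (1 - Real.sqrt 2 * ((Fintype.card F : ℝ) ^ p.natDegree)⁻¹)⁻¹
      ≤ Real.exp (6 * (1 + Real.log n)) := by
  classical
  have hptwise : ∀ p ∈ (irr_set_finite (F := F) n).toFinset,
      (1 - Real.sqrt 2 * ((Fintype.card F : ℝ) ^ p.natDegree)⁻¹)⁻¹
        ≤ Real.exp (6 * ((Fintype.card F : ℝ) ^ p.natDegree)⁻¹) := by
    intro p hp
    rw [Set.Finite.mem_toFinset] at hp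
    have hd : 1 ≤ p.natDegree :=
      natDegree_pos_iff_degree_pos.mpr (Polynomial.degree_pos_of_irreducible hp.2.1)
    have hff := factor_facts (F := F) p.natDegree hd
    set u : ℝ := Real.sqrt 2 * ((Fintype.card F : ℝ) ^ p.natDegree)⁻¹ with hu
    set w : ℝ := ((Fintype.card F : ℝ) ^ p.natDegree)⁻¹ with hw
    have hu0 : 0 ≤ u := by rw [hu]; positivity
    have h14 : (1 - u)⁻¹ ≤ 1 + 4 * u := by
      rw [inv_le_iff_one_le_mul₀ hff.1]
      nlinarith [hff.2.1]
    have hsqrt : Real.sqrt 2 ≤ 3/2 := by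
      nlinarith [Real.sq_sqrt (by norm_num : (2:ℝ) ≥ 0), Real.sqrt_nonneg 2]
    have hw0 : 0 ≤ w := by rw [hw]; positivity
    calc (1 - u)⁻¹ ≤ 1 + 4 * u := h14
      _ ≤ Real.exp (4 * u) := by
          have := Real.add_one_le_exp (4 * u)
          linarith
      _ ≤ Real.exp (6 * w) := by
          rw [Real.exp_le_exp]
          rw [hu]
          nlinarith
  calc ∏ p ∈ (irr_set_finite (F := F) n).toFinset,
      (1 - Real.sqrt 2 * ((Fintype.card F : ℝ) ^ p.natDegree)⁻¹)⁻¹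
      ≤ ∏ p ∈ (irr_set_finite (F := F) n).toFinset,
        Real.exp (6 * ((Fintype.card F : ℝ) ^ p.natDegree)⁻¹) := by
        apply Finset.prod_le_prod
        · intro p hp
          rw [Set.Finite.mem_toFinset] at hp
          have hd : 1 ≤ p.natDegree :=
            natDegree_pos_iff_degree_pos.mpr (Polynomial.degree_pos_of_irreducible hp.2.1)
          have hff := factor_facts (F := F) p.natDegree hd
          exact le_of_lt (inv_pos.mpr hff.1)
        · exact hptwise
    _ = Real.exp (∑ p ∈ (irr_set_finite (F := F) n).toFinset,
        6 * ((Fintype.card F : ℝ) ^ p.natDegree)⁻¹) := (Real.exp_sum _ _).symm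
    _ ≤ Real.exp (6 * (1 + Real.log n)) := by
        rw [Real.exp_le_exp, ← Finset.mul_sum]
        have := sum_wt_le (F := F) n hn
        nlinarith [this]

theorem endgame (k : ℝ) (hk : 0 < k) (n : ℕ) (hn : 2 ≤ n) :
    ((Real.sqrt 2)⁻¹) ^ (⌊(3*k+60) * Real.log n⌋₊) * Real.exp (6 * (1 + Real.log n))
      ≤ (n:ℝ) ^ (-k) := by
  have hn2 : (2:ℝ) ≤ (n:ℝ) := by exact_mod_cast hn
  have hnpos : (0:ℝ) < (n:ℝ) := by linarith
  set L : ℝ := Real.log n with hL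
  have hL2 : Real.log 2 ≤ L := Real.log_le_log (by norm_num) hn2
  have hlog2gt : (0.6931471803 : ℝ) < Real.log 2 := Real.log_two_gt_d9
  have hlog2lt : Real.log 2 < 0.6931471808 := Real.log_two_lt_d9
  have hLpos : 0 < L := by linarith
  set t : ℕ := ⌊(3*k+60) * L⌋₊ with ht
  have htlow : (3*k+60) * L - 1 ≤ (t:ℝ) := by
    have := Nat.lt_floor_add_one ((3*k+60) * L)
    push_cast
    linarith
  have hxr : (Real.sqrt 2)⁻¹ = Real.exp (-(Real.log 2 / 2)) := by
    rw [← Real.log_sqrt (by norm_num : (0:ℝ) ≤ 2), Real.exp_neg,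
      Real.exp_log (Real.sqrt_pos.mpr (by norm_num))]
  have hpow : ((Real.sqrt 2)⁻¹) ^ t = Real.exp ((t:ℝ) * (-(Real.log 2 / 2))) := by
    rw [hxr, Real.exp_nat_mul]
  have hrpow : (n:ℝ) ^ (-k) = Real.exp ((-k) * L) := by
    rw [Real.rpow_def_of_pos hnpos, hL]; ring_nf
  rw [hpow, ← Real.exp_add, hrpow, Real.exp_le_exp]
  -- need : t * (-(log2/2)) + 6*(1+L) ≤ -k*L
  have hc : (0:ℝ) < Real.log 2 / 2 := by linarith
  have h1 : ((3*k+60) * L - 1) * (Real.log 2 / 2) ≤ (t:ℝ) * (Real.log 2 / 2) :=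
    mul_le_mul_of_nonneg_right htlow (le_of_lt hc)
  nlinarith [mul_le_mul_of_nonneg_right (le_of_lt hlog2gt)
      (le_of_lt (mul_pos (by linarith : (0:ℝ) < 3*k+60) hLpos)),
    mul_pos hk hLpos, mul_lt_mul_of_pos_left hlog2lt hLpos]

theorem count_monic_ge (n : ℕ) (hn : 2 ≤ n) (c : F) :
    Fintype.card F ^ (n-1)
      ≤ {P : Polynomial F | P.Monic ∧ P.natDegree = n ∧ P.eval 0 = c}.ncard := by
  classical
  set g : (Fin (n-1) → F) → Polynomial F :=
    fun v => X ^ n + ((∑ i : Fin (n-1), C (v i) * X ^ ((i:ℕ)+1)) + C c) with hg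
  have hdeglt : ∀ v : Fin (n-1) → F,
      ((∑ i : Fin (n-1), C (v i) * X ^ ((i:ℕ)+1)) + C c).degree < (n : ℕ) := by
    intro v
    apply lt_of_le_of_lt (Polynomial.degree_add_le _ _)
    rw [max_lt_iff]
    constructor
    · apply lt_of_le_of_lt (Polynomial.degree_sum_le _ _)
      rw [Finset.sup_lt_iff (by exact_mod_cast WithBot.bot_lt_coe (n:ℕ))]
      intro i _
      apply lt_of_le_of_lt (Polynomial.degree_C_mul_X_pow_le _ _)
      exact_mod_cast Nat.lt_of_lt_of_le (by omega : (i:ℕ)+1 < n) le_rfl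
    · exact lt_of_le_of_lt Polynomial.degree_C_le (by exact_mod_cast (show 0 < n by omega))
  have hcoeff : ∀ v : Fin (n-1) → F, ∀ i : Fin (n-1), (g v).coeff ((i:ℕ)+1) = v i := by
    intro v i
    rw [hg]
    simp only [Polynomial.coeff_add, Polynomial.coeff_X_pow, Polynomial.coeff_C]
    have h1 : ¬ ((i:ℕ)+1 = n) := by omega
    have h2 : ¬ ((i:ℕ)+1 = 0) := by omega
    rw [if_neg h1, if_neg h2]
    rw [Polynomial.finset_sum_coeff]
    rw [Finset.sum_eq_single i]
    · simp [Polynomial.coeff_C_mul, Polynomial.coeff_X_pow]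
    · intro j _ hji
      simp only [Polynomial.coeff_C_mul, Polynomial.coeff_X_pow]
      rw [if_neg (by simp; omega), mul_zero]
    · intro h; exact absurd (Finset.mem_univ i) h
  have hmem : ∀ v : Fin (n-1) → F,
      g v ∈ {P : Polynomial F | P.Monic ∧ P.natDegree = n ∧ P.eval 0 = c} := by
    intro v
    refine ⟨Polynomial.monic_X_pow_add (hdeglt v), ?_, ?_⟩
    · rw [hg]
      simp only
      rw [Polynomial.natDegree_add_eq_left_of_degree_lt]
      · exact Polynomial.natDegree_X_pow n
      · rw [Polynomial.degree_X_pow]; exact hdeglt v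
    · rw [hg]
      simp only [Polynomial.eval_add, Polynomial.eval_pow, Polynomial.eval_X,
        Polynomial.eval_finset_sum, Polynomial.eval_mul, Polynomial.eval_C]
      rw [zero_pow (by omega : n ≠ 0)]
      simp
  have hinj : Function.Injective g := by
    intro v w hvw
    funext i
    rw [← hcoeff v i, ← hcoeff w i, hvw]
  have h1 : Nat.card (Set.range g) = Fintype.card F ^ (n-1) := by
    rw [Nat.card_range_of_injective hinj, Nat.card_eq_fintype_card, Fintype.card_fun,
      Fintype.card_fin]
  have h2 : (Set.range g).ncard ≤
      {P : Polynomial F | P.Monic ∧ P.natDegree = n ∧ P.eval 0 = c}.ncard := by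
    apply Set.ncard_le_ncard
    · rintro P ⟨v, rfl⟩; exact hmem v
    · exact (finite_natDegree_le n).subset (fun P hP => le_of_eq hP.2.1)
  calc Fintype.card F ^ (n-1) = (Set.range g).ncard := by
        rw [← h1, Nat.card_coe_set_eq]
    _ ≤ _ := h2

/-- For every `k > 0` there exists `N` such that for every `n ≥ 2` and every finite field
`F_q`, the number of monic polynomials `P` of degree `n` with `P(0) = (-1)^n` having more
than `N log n` monic irreducible factors (with multiplicity) is at most `n^{-k}` times
the total number of such polynomials. -/
theorem few_factors_SL (k : ℝ) (hk : 0 < k) :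
    ∃ N : ℝ, ∀ n : ℕ, 2 ≤ n → ∀ q : ℕ, IsPrimePow q →
      ∀ (F : Type) [Field F] [Fintype F], Fintype.card F = q →
      (Set.ncard {P : Polynomial F | P.Monic ∧ P.natDegree = n ∧ P.eval 0 = (-1) ^ n ∧
          N * Real.log n <
            ((UniqueFactorizationMonoid.factors P).card : ℝ)} : ℝ) ≤
        (n : ℝ) ^ (-k) *
          (Set.ncard {P : Polynomial F | P.Monic ∧ P.natDegree = n ∧
            P.eval 0 = (-1) ^ n} : ℝ) := by
  refine ⟨3*k+60, ?_⟩
  intro n hn q hq F _ _ hcard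
  letI : DecidableEq F := Classical.decEq F
  set c : F := (-1)^n with hc'
  have hc : c ≠ 0 := pow_ne_zero _ (neg_ne_zero.mpr one_ne_zero)
  set t : ℕ := ⌊(3*k+60) * Real.log n⌋₊ with ht
  set L : List (Polynomial F) := (irr_set_finite (F := F) n).toFinset.toList with hLdef
  have hLprops : ∀ p ∈ L, p.Monic ∧ Irreducible p := by
    intro p hp
    rw [hLdef, Finset.mem_toList, Set.Finite.mem_toFinset] at hp
    exact ⟨hp.1, hp.2.1⟩
  have hlogn : 0 ≤ Real.log n := Real.log_nonneg (by exact_mod_cast by omega)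
  have hBsub : {P : Polynomial F | P.Monic ∧ P.natDegree = n ∧ P.eval 0 = (-1) ^ n ∧
      (3*k+60) * Real.log n < ((UniqueFactorizationMonoid.factors P).card : ℝ)}
      ⊆ SB n t L c := by
    rintro P ⟨hPm, hPd, hPe, hPc⟩
    have hnf : Multiset.card (UniqueFactorizationMonoid.normalizedFactors P)
        = Multiset.card (UniqueFactorizationMonoid.factors P) := by
      rw [UniqueFactorizationMonoid.normalizedFactors]
      exact Multiset.card_map _ _
    refine ⟨hPm, hPd, hPe, ?_, ?_⟩
    · have h1 : (t:ℝ) ≤ (3*k+60) * Real.log n :=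
        Nat.floor_le (mul_nonneg (by linarith) hlogn)
      have h2 : (t:ℝ) < ((UniqueFactorizationMonoid.factors P).card : ℝ) := lt_of_le_of_lt h1 hPc
      rw [hnf]
      exact_mod_cast h2
    · intro r hr
      rw [hLdef, Finset.mem_toList, Set.Finite.mem_toFinset]
      have hr_irr := UniqueFactorizationMonoid.irreducible_of_normalized_factor r hr
      have hrnorm := UniqueFactorizationMonoid.normalize_normalized_factor r hr
      have hrm : r.Monic := by
        rw [← hrnorm]; exact Polynomial.monic_normalize hr_irr.ne_zero
      have hdvd := UniqueFactorizationMonoid.dvd_of_mem_normalizedFactors hr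
      have hdeg : r.natDegree ≤ P.natDegree := Polynomial.natDegree_le_of_dvd hdvd hPm.ne_zero
      exact ⟨hrm, hr_irr, by omega⟩
  have h0 : ({P : Polynomial F | P.Monic ∧ P.natDegree = n ∧ P.eval 0 = (-1) ^ n ∧
      (3*k+60) * Real.log n < ((UniqueFactorizationMonoid.factors P).card : ℝ)}.ncard : ℝ)
      ≤ ((SB n t L c).ncard : ℝ) := by
    exact_mod_cast Set.ncard_le_ncard hBsub (SB_finite n t L c)
  have h1 := main_count (F := F) t n L c hc (by omega) hLprops
  have hlist : (L.map (fun p => (1 - Real.sqrt 2 *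
      ((Fintype.card F : ℝ) ^ p.natDegree)⁻¹)⁻¹)).prod
      = ∏ p ∈ (irr_set_finite (F := F) n).toFinset,
        (1 - Real.sqrt 2 * ((Fintype.card F : ℝ) ^ p.natDegree)⁻¹)⁻¹ := by
    rw [hLdef]; exact Finset.prod_map_toList _ _
  have h3 := prod_bound (F := F) n (by omega)
  have h4 := endgame k hk n hn
  have h5 : ((Fintype.card F : ℝ)) ^ (n-1) ≤
      ({P : Polynomial F | P.Monic ∧ P.natDegree = n ∧ P.eval 0 = c}.ncard : ℝ) := by
    exact_mod_cast count_monic_ge (F := F) n hn c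
  have hA : (0:ℝ) ≤ (Fintype.card F : ℝ) ^ (n-1) := by positivity
  have hxr : (0:ℝ) ≤ (Real.sqrt 2)⁻¹ ^ t := by positivity
  have hnk : (0:ℝ) ≤ (n:ℝ) ^ (-k) := Real.rpow_nonneg (by positivity) _
  calc ({P : Polynomial F | P.Monic ∧ P.natDegree = n ∧ P.eval 0 = (-1) ^ n ∧
        (3*k+60) * Real.log n < ((UniqueFactorizationMonoid.factors P).card : ℝ)}.ncard : ℝ)
      ≤ ((SB n t L c).ncard : ℝ) := h0
    _ ≤ (Fintype.card F : ℝ) ^ (n-1) * (Real.sqrt 2)⁻¹ ^ t *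
        (L.map (fun p => (1 - Real.sqrt 2 * ((Fintype.card F : ℝ) ^ p.natDegree)⁻¹)⁻¹)).prod := h1
    _ ≤ (Fintype.card F : ℝ) ^ (n-1) * (Real.sqrt 2)⁻¹ ^ t *
        Real.exp (6 * (1 + Real.log n)) := by
        rw [hlist]
        exact mul_le_mul_of_nonneg_left h3 (mul_nonneg hA hxr)
    _ = (Fintype.card F : ℝ) ^ (n-1) * ((Real.sqrt 2)⁻¹ ^ t * Real.exp (6 * (1 + Real.log n))) :=
        by ring
    _ ≤ (Fintype.card F : ℝ) ^ (n-1) * (n:ℝ) ^ (-k) := mul_le_mul_of_nonneg_left h4 hA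
    _ = (n:ℝ) ^ (-k) * (Fintype.card F : ℝ) ^ (n-1) := by ring
    _ ≤ _ := mul_le_mul_of_nonneg_left h5 hnk
end

section
/- There exists an absolute constant c such that for every finite field F_q and all positive integers m and n, the number of monic irreducible polynomials f ∈ F_q[x] of degree n that have two distinct roots α ≠ β in an algebraic closure of F_q with (α β^{−1})^m = 1 is at most c · m · n · q^{n/2}. -/
open Polynomial IntermediateField

lemma conj_lemma (F : Type) [Field F] [Fintype F] (n : ℕ) (f : F[X])
    (hm : f.Monic) (hirr : Irreducible f) (hdeg : f.natDegree = n)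
    {α β : AlgebraicClosure F} (hne : α ≠ β)
    (hα : Polynomial.aeval α f = 0) (hβ : Polynomial.aeval β f = 0) :
    ∃ j, 1 ≤ j ∧ 2*j ≤ n ∧
      (β = α ^ (Fintype.card F)^j ∨ α = β ^ (Fintype.card F)^j) := by
  classical
  letI K := AlgebraicClosure F
  set q := Fintype.card F with hqdef
  set p := ringChar F with hpdef
  have hp : p.Prime := CharP.char_is_prime F p
  haveI : Fact p.Prime := ⟨hp⟩
  obtain ⟨s, -, hq⟩ := FiniteField.card F p
  haveI : CharP K p := charP_of_injective_algebraMap (algebraMap F K).injective p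
  set ψ : ℕ → (K →+* K) := fun j => iterateFrobenius K p (s*j) with hψdef
  have hψ : ∀ j x, ψ j x = x ^ q ^ j := by
    intro j x
    rw [hψdef]
    simp only [iterateFrobenius_def]
    rw [hqdef, hq, ← pow_mul]
  have hcomp : ∀ j, (ψ j).comp (algebraMap F K) = algebraMap F K := by
    intro j
    ext c
    rw [RingHom.comp_apply, hψ, ← map_pow, FiniteField.pow_card_pow]
  -- all q-power conjugates of a root are roots
  have hroot : ∀ (γ : K), Polynomial.aeval γ f = 0 → ∀ j, Polynomial.aeval (γ ^ q ^ j) f = 0 := by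
    intro γ hγ j
    have h2 := Polynomial.hom_eval₂ f (algebraMap F K) (ψ j) γ
    rw [hcomp] at h2
    simp only [hψ] at h2
    rw [aeval_def, ← h2, ← aeval_def, hγ]
    exact zero_pow (pow_ne_zero _ Fintype.card_ne_zero)
  have hone : 1 < q := Fintype.one_lt_card
  -- root multiset
  set R : Multiset K := (f.map (algebraMap F K)).roots with hRdef
  have hsplits := IsAlgClosed.splits (f.map (algebraMap F K))
  have hcardR : Multiset.card R = n := by
    rw [hRdef, ← hsplits.natDegree_eq_card_roots, Polynomial.natDegree_map, hdeg]
  have hsep : f.Separable := PerfectField.separable_of_irreducible hirr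
  have hnodup : R.Nodup := Polynomial.nodup_roots (hsep.map)
  have hfne : f.map (algebraMap F K) ≠ 0 :=
    (Polynomial.map_ne_zero_iff (algebraMap F K).injective).mpr hm.ne_zero
  have hmem : ∀ γ : K, Polynomial.aeval γ f = 0 → γ ∈ R := by
    intro γ hγ
    rw [hRdef, Polynomial.mem_roots hfne, Polynomial.IsRoot, Polynomial.eval_map,
      ← Polynomial.aeval_def]
    exact hγ
  -- degree at least 2
  have h2n : 2 ≤ n := by
    have hsub : ({α, β} : Finset K) ⊆ R.toFinset := by
      intro x hx
      rcases Finset.mem_insert.mp hx with h | h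
      · subst h; exact Multiset.mem_toFinset.mpr (hmem _ hα)
      · rw [Finset.mem_singleton.mp h]; exact Multiset.mem_toFinset.mpr (hmem _ hβ)
    have := Finset.card_le_card hsub
    rw [Finset.card_pair hne] at this
    calc 2 ≤ R.toFinset.card := this
    _ ≤ Multiset.card R := Multiset.toFinset_card_le R
    _ = n := hcardR
  -- f is the minimal polynomial of α
  have hminα : f = minpoly F α := minpoly.eq_of_irreducible_of_monic hirr hα hm
  have hint : IsIntegral F α := by
    have : Algebra.IsAlgebraic F K := inferInstance
    exact (Algebra.IsAlgebraic.isAlgebraic α).isIntegral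
  -- the field F(α) has q^n elements
  set E : IntermediateField F K := F⟮α⟯ with hEdef
  have hfinrank : Module.finrank F E = n := by
    rw [hEdef, IntermediateField.adjoin.finrank hint, ← hminα, hdeg]
  haveI : FiniteDimensional F E := IntermediateField.adjoin.finiteDimensional hint
  haveI : Finite E := Module.finite_of_finite F
  haveI : Fintype E := Fintype.ofFinite E
  have hcardE : Fintype.card E = q ^ n := by
    rw [Module.card_eq_pow_finrank (K := F) (V := E), hfinrank]
  have hαE : α ∈ E := IntermediateField.mem_adjoin_simple_self F α
  have hαn : α ^ q ^ n = α := by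
    have h := FiniteField.pow_card (⟨α, hαE⟩ : E)
    rw [hcardE] at h
    have := congrArg (Subtype.val) h
    push_cast at this
    exact this
  -- distinct conjugates
  have hdist : ∀ d, 0 < d → d < n → α ^ q ^ d ≠ α := by
    intro d hd hdn hfix
    -- the fixed subfield of ψ d
    set S : Subfield K := RingHom.eqLocusField (ψ d) (RingHom.id K) with hSdef
    have hmemS : ∀ x : K, x ∈ S ↔ x ^ q ^ d = x := by
      intro x
      constructor
      · intro hx
        have : ψ d x = RingHom.id K x := hx
        rwa [hψ, RingHom.id_apply] at this
      · intro hx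
        show ψ d x = RingHom.id K x
        rw [hψ, RingHom.id_apply, hx]
    set E' : IntermediateField F K := S.toIntermediateField (fun c => by
      rw [hmemS, ← map_pow, FiniteField.pow_card_pow]) with hE'def
    have hle : E ≤ E' := by
      rw [hEdef]
      apply IntermediateField.adjoin_le_iff.mpr
      intro x hx
      rw [Set.mem_singleton_iff.mp hx]
      exact (hmemS α).mpr hfix
    -- every element of E is a root of X^(q^d) - X
    set g : Polynomial K := Polynomial.X ^ (q ^ d) - Polynomial.X with hgdef
    have hqd : 1 < q ^ d := Nat.one_lt_pow (by omega) hone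
    have hgdeg : g.natDegree = q ^ d := by
      rw [hgdef, Polynomial.natDegree_sub_eq_left_of_natDegree_lt]
      · exact Polynomial.natDegree_X_pow _
      · rw [Polynomial.natDegree_X_pow, Polynomial.natDegree_X]
        omega
    have hgne : g ≠ 0 := by
      intro h0
      rw [h0, Polynomial.natDegree_zero] at hgdeg
      omega
    have hsubroots : (E : Set K) ⊆ (g.roots.toFinset : Set K) := by
      intro x hx
      have hxE' : x ∈ E' := hle hx
      have hxfix : x ^ q ^ d = x := (hmemS x).mp hxE'
      simp only [Finset.coe_sort_coe, Multiset.mem_toFinset, Finset.mem_coe]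
      rw [Polynomial.mem_roots hgne, Polynomial.IsRoot, hgdef]
      simp [hxfix]
    have hcard1 : q ^ n ≤ q ^ d := by
      calc q ^ n = Fintype.card E := hcardE.symm
      _ = Nat.card E := (Nat.card_eq_fintype_card).symm
      _ = Set.ncard (E : Set K) := by
          rw [← Nat.card_coe_set_eq]
          rfl
      _ ≤ Set.ncard ((g.roots.toFinset : Finset K) : Set K) :=
          Set.ncard_le_ncard hsubroots (Finset.finite_toSet _)
      _ = g.roots.toFinset.card := Set.ncard_coe_finset _
      _ ≤ Multiset.card g.roots := Multiset.toFinset_card_le _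
      _ ≤ g.natDegree := Polynomial.card_roots' g
      _ = q ^ d := hgdeg
    exact absurd hcard1 (by
      have := Nat.pow_lt_pow_right hone hdn
      omega)
  -- the n conjugates are pairwise distinct
  have hkey : ∀ i j : ℕ, i < j → j < n → α ^ q ^ i ≠ α ^ q ^ j := by
    intro i j hij hjn heq
    have hd : α ^ q ^ (j - i) = α := by
      apply (ψ i).injective
      rw [hψ, hψ, ← pow_mul, ← pow_add, Nat.sub_add_cancel hij.le, ← heq]
    exact hdist (j - i) (by omega) (by omega) hd
  -- the set of conjugates coincides with the root set
  set A : Finset K := (Finset.range n).image (fun j => α ^ q ^ j) with hAdef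
  have hAcard : A.card = n := by
    rw [hAdef, Finset.card_image_of_injOn, Finset.card_range]
    intro i hi j hj hij
    simp only [Finset.coe_range, Set.mem_Iio] at hi hj
    rcases lt_trichotomy i j with h | h | h
    · exact absurd hij (hkey i j h hj)
    · exact h
    · exact absurd hij.symm (hkey j i h hi)
  have hAsub : A ⊆ R.toFinset := by
    intro x hx
    rw [hAdef] at hx
    obtain ⟨j, -, rfl⟩ := Finset.mem_image.mp hx
    exact Multiset.mem_toFinset.mpr (hmem _ (hroot α hα j))
  have hAeq : A = R.toFinset := by
    apply Finset.eq_of_subset_of_card_le hAsub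
    rw [hAcard, Multiset.toFinset_card_of_nodup hnodup, hcardR]
  -- β is a conjugate of α
  have hβA : β ∈ A := by
    rw [hAeq]
    exact Multiset.mem_toFinset.mpr (hmem _ hβ)
  rw [hAdef] at hβA
  obtain ⟨j, hjn, hjβ⟩ := Finset.mem_image.mp hβA
  rw [Finset.mem_range] at hjn
  have hj0 : j ≠ 0 := by
    intro h0
    rw [h0, pow_zero, pow_one] at hjβ
    exact hne hjβ
  by_cases hcase : 2 * j ≤ n
  · exact ⟨j, by omega, hcase, Or.inl hjβ.symm⟩
  · refine ⟨n - j, by omega, by omega, Or.inr ?_⟩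
    rw [← hjβ, ← pow_mul, ← pow_add, Nat.add_sub_cancel' hjn.le, hαn]

lemma core_lemma (F : Type) [Field F] [Fintype F] (m n : ℕ) (hm0 : 0 < m) (f : Polynomial F)
    (hmonic : f.Monic) (hirr : Irreducible f) (hdeg : f.natDegree = n)
    {α β : AlgebraicClosure F} (hne : α ≠ β)
    (hα : Polynomial.aeval α f = 0) (hβ : Polynomial.aeval β f = 0)
    (hratio : (α * β⁻¹) ^ m = 1) :
    ∃ γ : AlgebraicClosure F, Polynomial.aeval γ f = 0 ∧ ∃ k, 1 ≤ k ∧ 2*k ≤ n ∧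
      γ ^ (m * ((Fintype.card F)^k - 1)) = 1 := by
  set q := Fintype.card F with hqdef
  have hone : 1 < q := Fintype.one_lt_card
  have hβ0 : β ≠ 0 := by
    intro h0
    rw [h0, inv_zero, mul_zero, zero_pow (by omega)] at hratio
    exact zero_ne_one hratio
  have hα0 : α ≠ 0 := by
    intro h0
    rw [h0, zero_mul, zero_pow (by omega)] at hratio
    exact zero_ne_one hratio
  have hpow : α ^ m = β ^ m := by
    have := hratio
    rw [mul_pow, inv_pow] at this
    field_simp at this
    exact this
  obtain ⟨j, hj1, hj2, hcase⟩ := conj_lemma F n f hmonic hirr hdeg hne hα hβ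
  have key : ∀ γ δ : AlgebraicClosure F, γ ≠ 0 → γ ^ m = δ ^ m → δ = γ ^ q ^ j →
      γ ^ (m * (q ^ j - 1)) = 1 := by
    intro γ δ hγ0 hγδ hδ
    have hq1 : 1 ≤ q ^ j := Nat.one_le_pow _ _ (by omega)
    have h1 : γ ^ (m * (q ^ j - 1)) * γ ^ m = γ ^ m := by
      rw [← pow_add]
      have : m * (q ^ j - 1) + m = m * q ^ j := by
        rw [← Nat.mul_succ]
        congr 1
        omega
      rw [this, pow_mul', ← hδ, ← hγδ]
    exact mul_right_cancel₀ (pow_ne_zero m hγ0) (by rw [h1, one_mul])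
  rcases hcase with h | h
  · exact ⟨α, hα, j, hj1, hj2, key α β hα0 hpow h⟩
  · exact ⟨β, hβ, j, hj1, hj2, key β α hβ0 hpow.symm h⟩


/-- There is an absolute constant `c` such that for every finite field `F_q` and all
positive integers `m` and `n`, the number of monic irreducible polynomials of degree `n`
over `F_q` having two distinct roots `α ≠ β` in the algebraic closure with
`(α β⁻¹)^m = 1` is at most `c · m · n · q^{n/2}`. -/
theorem count_irreducibles_with_root_ratio_root_of_unity :
    ∃ c : ℝ, ∀ (F : Type) [Field F] [Fintype F] (m n : ℕ), 0 < m → 0 < n →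
      (Set.ncard {f : Polynomial F | f.Monic ∧ Irreducible f ∧ f.natDegree = n ∧
          ∃ α β : AlgebraicClosure F, α ≠ β ∧
            Polynomial.aeval α f = 0 ∧ Polynomial.aeval β f = 0 ∧
            (α * β⁻¹) ^ m = 1} : ℝ) ≤
        c * m * n * (Fintype.card F : ℝ) ^ ((n : ℝ) / 2) := by
  classical
  use 1
  intro F _ _ m n hm0 hn0
  set q := Fintype.card F with hqdef
  have hone : 1 < q := Fintype.one_lt_card
  set K := AlgebraicClosure F with hKdef
  set P : Set (Polynomial F) := {f : Polynomial F | f.Monic ∧ Irreducible f ∧ f.natDegree = n ∧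
          ∃ α β : K, α ≠ β ∧
            Polynomial.aeval α f = 0 ∧ Polynomial.aeval β f = 0 ∧
            (α * β⁻¹) ^ m = 1} with hPdef
  -- the property used to pick a distinguished root
  set Φ : Polynomial F → Prop := fun f => ∃ γ : K, Polynomial.aeval γ f = 0 ∧
      ∃ k, 1 ≤ k ∧ 2*k ≤ n ∧ γ ^ (m * (q^k - 1)) = 1 with hΦdef
  have hΦP : ∀ f ∈ P, Φ f := by
    rintro f ⟨hmonic, hirr, hdeg, α, β, hne, hα, hβ, hratio⟩
    exact core_lemma F m n hm0 f hmonic hirr hdeg hne hα hβ hratio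
  set g : Polynomial F → K := fun f => if h : Φ f then h.choose else 0 with hgdef
  have hgspec : ∀ f ∈ P, Polynomial.aeval (g f) f = 0 ∧
      ∃ k, 1 ≤ k ∧ 2*k ≤ n ∧ (g f) ^ (m * (q^k - 1)) = 1 := by
    intro f hf
    have h := hΦP f hf
    simp only [hgdef, dif_pos h]
    exact h.choose_spec
  -- target finite set
  set T : Finset K := (Finset.Icc 1 (n/2)).biUnion
      (fun k => ((Polynomial.X : Polynomial K) ^ (m * (q^k - 1)) - Polynomial.C 1).roots.toFinset)
    with hTdef
  have hexp : ∀ k, 1 ≤ k → 0 < m * (q^k - 1) := by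
    intro k hk
    have : 2 ≤ q ^ k := le_trans (by omega) (Nat.le_self_pow (by omega) q)
    exact Nat.mul_pos hm0 (by omega)
  have hmapsto : ∀ f ∈ P, g f ∈ (T : Set K) := by
    intro f hf
    obtain ⟨-, k, hk1, hk2, hγ⟩ := hgspec f hf
    have hk : k ∈ Finset.Icc 1 (n/2) := by
      rw [Finset.mem_Icc]
      exact ⟨hk1, Nat.le_div_iff_mul_le (by omega) |>.mpr (by omega)⟩
    simp only [hTdef, Finset.coe_biUnion, Set.mem_iUnion, Finset.mem_coe]
    refine ⟨k, hk, Multiset.mem_toFinset.mpr ?_⟩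
    rw [Polynomial.mem_roots (Polynomial.X_pow_sub_C_ne_zero (hexp k hk1) 1)]
    simp [Polynomial.IsRoot, hγ]
  have hinj : Set.InjOn g P := by
    rintro f1 hf1 f2 hf2 heq
    obtain ⟨h1, -⟩ := hgspec f1 hf1
    obtain ⟨h2, -⟩ := hgspec f2 hf2
    obtain ⟨hm1, hi1, -⟩ := hf1
    obtain ⟨hm2, hi2, -⟩ := hf2
    rw [minpoly.eq_of_irreducible_of_monic hi1 h1 hm1,
      minpoly.eq_of_irreducible_of_monic hi2 h2 hm2, heq]
  have hcount : Set.ncard P ≤ T.card := by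
    have := Set.ncard_le_ncard_of_injOn g hmapsto hinj (Finset.finite_toSet T)
    rwa [Set.ncard_coe_finset] at this
  have hTcard : T.card ≤ (n/2) * (m * q^(n/2)) := by
    calc T.card ≤ ∑ k ∈ Finset.Icc 1 (n/2),
        ((Polynomial.X : Polynomial K) ^ (m * (q^k - 1)) - Polynomial.C 1).roots.toFinset.card :=
          Finset.card_biUnion_le
    _ ≤ ∑ k ∈ Finset.Icc 1 (n/2), m * q^(n/2) := by
        apply Finset.sum_le_sum
        intro k hk
        rw [Finset.mem_Icc] at hk
        calc ((Polynomial.X : Polynomial K) ^ (m * (q^k - 1)) - Polynomial.C 1).roots.toFinset.card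
            ≤ Multiset.card ((Polynomial.X : Polynomial K) ^ (m * (q^k - 1))
                - Polynomial.C 1).roots := Multiset.toFinset_card_le _
        _ ≤ ((Polynomial.X : Polynomial K) ^ (m * (q^k - 1)) - Polynomial.C 1).natDegree :=
            Polynomial.card_roots' _
        _ = m * (q^k - 1) := Polynomial.natDegree_X_pow_sub_C
        _ ≤ m * q^(n/2) := Nat.mul_le_mul_left m
            (le_trans (Nat.sub_le _ _) (Nat.pow_le_pow_right (by omega) hk.2))
    _ = (n/2) * (m * q^(n/2)) := by rw [Finset.sum_const, Nat.card_Icc]; simp [Nat.smul_one_eq_cast]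
  -- pass to the reals
  have hfinal : Set.ncard P ≤ n * (m * q^(n/2)) :=
    le_trans hcount (le_trans hTcard (Nat.mul_le_mul_right _ (Nat.div_le_self n 2)))
  have hcast : ((Set.ncard P : ℕ) : ℝ) ≤ (n : ℝ) * ((m : ℝ) * (q : ℝ)^(n/2 : ℕ)) := by
    exact_mod_cast hfinal
  have hq1 : (1 : ℝ) ≤ (q : ℝ) := by exact_mod_cast hone.le
  have hrpow : ((q : ℝ))^(n/2 : ℕ) ≤ (q : ℝ) ^ ((n : ℝ) / 2) := by
    rw [← Real.rpow_natCast (q : ℝ) (n/2)]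
    apply Real.rpow_le_rpow_of_exponent_le hq1
    exact le_trans (Nat.cast_div_le) (by norm_num)
  calc ((Set.ncard P : ℕ) : ℝ) ≤ (n : ℝ) * ((m : ℝ) * (q : ℝ)^(n/2 : ℕ)) := hcast
  _ ≤ (n : ℝ) * ((m : ℝ) * (q : ℝ) ^ ((n : ℝ) / 2)) := by
      apply mul_le_mul_of_nonneg_left _ (Nat.cast_nonneg n)
      apply mul_le_mul_of_nonneg_left hrpow (Nat.cast_nonneg m)
  _ = 1 * m * n * (q : ℝ) ^ ((n : ℝ) / 2) := by ring
end
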